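/- arXiv:1907.01344 — 11 statements merged into one kernel-verified Lean document; each statement's English description precedes it below -/
import Mathlib

section
/- Let X and Y be non-empty profinite spaces (compact, Hausdorff, totally disconnected topological spaces) and let φ : X → Y be a continuous map that is nowhere locally constant, i.e. there is no non-empty open subset U of X such that the restriction of φ to U is constant. Then the image of φ has cardinality at least 2^ℵ₀. -/
/-- If `φ : X → Y` is a continuous map between non-empty profinite spaces that is
nowhere locally constant, then its image has cardinality at least `2^ℵ₀`. -/
theorem stmt0 {X Y : Type*} [TopologicalSpace X] [CompactSpace X] [T2Space X]
    [TotallyDisconnectedSpace X] [TopologicalSpace Y] [CompactSpace Y] [T2Space Y]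
    [TotallyDisconnectedSpace Y] [Nonempty X]
    (φ : X → Y) (hφ : Continuous φ)
    (h : ∀ U : Set X, IsOpen U → U.Nonempty → ¬∃ y : Y, ∀ x ∈ U, φ x = y) :
    Cardinal.continuum ≤ Cardinal.mk ↥(Set.range φ) := by
  haveI : TotallySeparatedSpace Y := loc_compact_t2_tot_disc_iff_tot_sep.mp ‹_›
  -- key step: split any nonempty clopen set into two pieces with disjoint clopen image targets
  have key : ∀ K : Set X, IsClopen K → K.Nonempty → ∃ V : Bool → Set Y,
      (∀ b, IsClopen (V b)) ∧ Disjoint (V false) (V true) ∧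
      ∀ b, (K ∩ φ ⁻¹' (V b)).Nonempty := by
    intro K hK hKne
    obtain ⟨x₀, hx₀⟩ := hKne
    have := h K hK.2 ⟨x₀, hx₀⟩
    push_neg at this
    obtain ⟨x₁, hx₁, hne⟩ := this (φ x₀)
    obtain ⟨U, hU, hU1, hU0⟩ := exists_isClopen_of_totally_separated hne
    refine ⟨fun b => if b then U else Uᶜ, ?_, ?_, ?_⟩
    · intro b; cases b <;> simp [hU, hU.compl]
    · simp [Set.disjoint_compl_left_iff_subset]
    · intro b; cases b
      · exact ⟨x₀, hx₀, hU0⟩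
      · exact ⟨x₁, hx₁, hU1⟩
  choose V hVclopen hVdisj hVne using key
  -- the step function on nonempty clopen subsets
  set T := {K : Set X // IsClopen K ∧ K.Nonempty} with hT
  let step : T → Bool → T := fun K b =>
    ⟨K.1 ∩ φ ⁻¹' (V K.1 K.2.1 K.2.2 b),
      ⟨K.2.1.inter ((hVclopen K.1 K.2.1 K.2.2 b).preimage hφ),
        hVne K.1 K.2.1 K.2.2 b⟩⟩
  let C : List Bool → T := fun s => s.foldr (fun b K => step K b) ⟨Set.univ, isClopen_univ, Set.univ_nonempty⟩
  have hCcons : ∀ b s, C (b :: s) = step (C s) b := fun _ _ => rfl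
  have hstep_sub : ∀ (K : T) b, (step K b).1 ⊆ K.1 := fun K b => Set.inter_subset_left
  have hstep_mem : ∀ (K : T) b x, x ∈ (step K b).1 → φ x ∈ V K.1 K.2.1 K.2.2 b :=
    fun K b x hx => hx.2
  -- finite prefixes
  let L : (ℕ → Bool) → ℕ → List Bool := fun f n => Nat.rec [] (fun m s => f m :: s) n
  have hL : ∀ f n, L f (n + 1) = f n :: L f n := fun _ _ => rfl
  -- choose a point in each infinite intersection
  have hx : ∀ f : ℕ → Bool, ∃ x, ∀ n, x ∈ (C (L f n)).1 := by
    intro f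
    have hne : (⋂ n, (C (L f n)).1).Nonempty := by
      apply IsCompact.nonempty_iInter_of_sequence_nonempty_isCompact_isClosed
      · intro n; rw [hL]; exact hstep_sub _ _
      · intro n; exact (C (L f n)).2.2
      · exact (C (L f 0)).2.1.1.isCompact
      · intro n; exact (C (L f n)).2.1.1
    obtain ⟨x, hx⟩ := hne
    exact ⟨x, fun n => Set.mem_iInter.mp hx n⟩
  choose x hxmem using hx
  -- injectivity of f ↦ φ (x f)
  have hinj : Function.Injective (fun f : ℕ → Bool => φ (x f)) := by
    intro f g hfg
    by_contra hne
    have hex : ∃ n, f n ≠ g n := by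
      by_contra hc; push_neg at hc; exact hne (funext hc)
    classical
    let n := Nat.find hex
    have hn : f n ≠ g n := Nat.find_spec hex
    have hlt : ∀ m < n, f m = g m := fun m hm => by
      by_contra hc; exact absurd (Nat.find_le hc) (Nat.not_le.mpr hm)
    have hLeq : L f n = L g n := by
      have : ∀ k, k ≤ n → L f k = L g k := by
        intro k hk
        induction k with
        | zero => rfl
        | succ m ih =>
          rw [hL, hL, ih (Nat.le_of_succ_le hk), hlt m (Nat.lt_of_succ_le hk)]
      exact this n le_rfl
    set K := C (L f n) with hK
    have hf1 : φ (x f) ∈ V K.1 K.2.1 K.2.2 (f n) := by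
      apply hstep_mem
      have := hxmem f (n + 1)
      rwa [hL] at this
    have hg1 : φ (x g) ∈ V K.1 K.2.1 K.2.2 (g n) := by
      apply hstep_mem
      have := hxmem g (n + 1)
      rw [hL, ← hLeq] at this
      exact this
    have hfg' : φ (x f) = φ (x g) := hfg
    rw [← hfg'] at hg1
    have hd := hVdisj K.1 K.2.1 K.2.2
    cases hb : f n with
    | false =>
      have : g n = true := by cases hc : g n <;> simp_all
      rw [hb] at hf1; rw [this] at hg1
      exact Set.disjoint_left.mp hd hf1 hg1
    | true =>
      have : g n = false := by cases hc : g n <;> simp_all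
      rw [hb] at hf1; rw [this] at hg1
      exact Set.disjoint_left.mp hd hg1 hf1
  -- conclude the cardinality bound
  have hF : Function.Injective (fun f : ℕ → Bool => (⟨φ (x f), Set.mem_range_self _⟩ : Set.range φ)) := by
    intro f g hfg
    exact hinj (congrArg Subtype.val hfg)
  have hle : Cardinal.lift.{_, 0} (Cardinal.mk (ℕ → Bool)) ≤
      Cardinal.lift.{0} (Cardinal.mk ↥(Set.range φ)) :=
    Cardinal.lift_mk_le'.mpr ⟨⟨_, hF⟩⟩
  have hmk : Cardinal.mk (ℕ → Bool) = Cardinal.continuum := by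
    rw [Cardinal.mk_arrow]
    simp [Cardinal.two_power_aleph0]
  rw [hmk, Cardinal.lift_continuum] at hle
  simpa using hle
end

section
/- Let G be a profinite group and let x ∈ G. If the conjugacy class {x^g : g ∈ G} of x contains fewer than 2^ℵ₀ elements, then it is finite. -/
open Set Filter Cardinal Topology

/-- A nonempty perfect compact set in a T2.5 space has cardinality at least continuum. -/
theorem aux_continuum_le_of_perfect_compact {X : Type*} [TopologicalSpace X] [T25Space X]
    {C : Set X} (hC : Perfect C) (hne : C.Nonempty) (hcomp : IsCompact C) :
    Cardinal.continuum ≤ Cardinal.mk C := by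
  classical
  -- splitting function
  have split : ∀ S : Set X, Perfect S → S.Nonempty → ∃ P : Bool → Set X,
      (∀ b, Perfect (P b) ∧ (P b).Nonempty ∧ P b ⊆ S) ∧ Disjoint (P false) (P true) := by
    intro S hS hSne
    obtain ⟨C₀, C₁, h₀, h₁, hd⟩ := hS.splitting hSne
    exact ⟨fun b => if b then C₁ else C₀, by rintro (_ | _) <;> simpa, by simpa⟩
  choose! P hP hPd using split
  -- iterated scheme along a boolean sequence
  let E : (ℕ → Bool) → ℕ → Set X := fun f => Nat.rec C (fun n S => P S (f n))
  have hE0 : ∀ f, E f 0 = C := fun _ => rfl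
  have hEsucc : ∀ f n, E f (n + 1) = P (E f n) (f n) := fun _ _ => rfl
  have hinv : ∀ f n, Perfect (E f n) ∧ (E f n).Nonempty := by
    intro f n
    induction n with
    | zero => exact ⟨hC, hne⟩
    | succ n ih => exact ⟨(hP _ ih.1 ih.2 (f n)).1, (hP _ ih.1 ih.2 (f n)).2.1⟩
  have hsub : ∀ f n, E f (n + 1) ⊆ E f n := by
    intro f n
    exact (hP _ (hinv f n).1 (hinv f n).2 (f n)).2.2
  have hsubC : ∀ f n, E f n ⊆ C := by
    intro f n
    induction n with
    | zero => exact fun _ h => h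
    | succ n ih => exact (hsub f n).trans ih
  -- choose a point in the intersection
  have hnonemptyInter : ∀ f : ℕ → Bool, (⋂ n, E f n).Nonempty := by
    intro f
    apply IsCompact.nonempty_iInter_of_sequence_nonempty_isCompact_isClosed
    · exact hsub f
    · exact fun n => (hinv f n).2
    · exact hcomp.of_isClosed_subset (hinv f 0).1.closed (hsubC f 0)
    · exact fun n => (hinv f n).1.closed
  choose p hp using hnonemptyInter
  have hpmem : ∀ f n, p f ∈ E f n := by
    intro f n
    exact mem_iInter.1 (hp f) n
  -- equal prefixes give equal sets
  have hEeq : ∀ (f g : ℕ → Bool) (n : ℕ), (∀ m < n, f m = g m) → E f n = E g n := by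
    intro f g n
    induction n with
    | zero => intro _; rfl
    | succ n ih =>
      intro hagree
      have h1 : E f n = E g n := ih fun m hm => hagree m (Nat.lt_succ_of_lt hm)
      rw [hEsucc, hEsucc, h1, hagree n (Nat.lt_succ_self n)]
  -- injectivity
  have hinj : Function.Injective fun f : ℕ → Bool => (⟨p f, hsubC f 0 (hpmem f 0)⟩ : C) := by
    intro f g hfg
    simp only [Subtype.mk.injEq] at hfg
    by_contra hne'
    have hex : ∃ n, f n ≠ g n := by
      by_contra hc
      push_neg at hc
      exact hne' (funext hc)
    let n := Nat.find hex
    have hn : f n ≠ g n := Nat.find_spec hex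
    have hmin : ∀ m < n, f m = g m := fun m hm => by
      by_contra hcm; exact absurd (Nat.find_le hcm : n ≤ m) (Nat.not_le_of_lt hm)
    have heq : E f n = E g n := hEeq f g n hmin
    have hd : Disjoint (E f (n + 1)) (E g (n + 1)) := by
      rw [hEsucc, hEsucc, heq]
      have hd0 := hPd (E g n) (hinv g n).1 (hinv g n).2
      cases hfn : f n <;> cases hgn : g n <;>
        first
          | exact absurd (hfn.trans hgn.symm) hn
          | exact hd0
          | exact hd0.symm
    exact (hd.ne_of_mem (hpmem f (n + 1)) (hpmem g (n + 1))) hfg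
  -- conclude
  have : Cardinal.lift.{_} (Cardinal.mk (ℕ → Bool)) ≤ Cardinal.lift.{0} (Cardinal.mk C) :=
    Cardinal.lift_mk_le'.2 ⟨⟨_, hinj⟩⟩
  have hmk : Cardinal.mk (ℕ → Bool) = Cardinal.continuum := by
    simp [Cardinal.mk_arrow, Cardinal.two_power_aleph0]
  rw [hmk, Cardinal.lift_continuum, Cardinal.lift_id'] at this
  exact this

/-- In a profinite group, a conjugacy class with fewer than `2^ℵ₀` elements is finite. -/
theorem stmt1 {G : Type*} [Group G] [TopologicalSpace G] [IsTopologicalGroup G]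
    [CompactSpace G] [T2Space G] [TotallyDisconnectedSpace G] (x : G)
    (h : Cardinal.mk ↥{y : G | ∃ g : G, y = g⁻¹ * x * g} < Cardinal.continuum) :
    {y : G | ∃ g : G, y = g⁻¹ * x * g}.Finite := by
  set C : Set G := {y : G | ∃ g : G, y = g⁻¹ * x * g} with hCdef
  have hconj : ∀ c : G, Continuous fun w : G => c⁻¹ * w * c := fun c =>
    ((continuous_const.mul continuous_id).mul continuous_const)
  have himage : C = (fun g : G => g⁻¹ * x * g) '' Set.univ := by
    ext y
    simp [hCdef, eq_comm]
  have hcomp : IsCompact C := by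
    rw [himage]
    exact isCompact_univ.image ((continuous_inv.mul continuous_const).mul continuous_id)
  have hclosed : IsClosed C := hcomp.isClosed
  have hxC : x ∈ C := ⟨1, by simp⟩
  by_contra hfin
  have hinf : C.Infinite := hfin
  -- C has an accumulation point
  obtain ⟨z, hzC, hz⟩ := hinf.exists_accPt_of_subset_isCompact hcomp (subset_refl C)
  -- every point of C is an accumulation point, by homogeneity
  have hpre : Preperfect C := by
    intro y hyC
    obtain ⟨a, ha⟩ := hzC
    obtain ⟨b, hb⟩ := hyC
    set c := a⁻¹ * b with hc
    have hmap : (fun w : G => c⁻¹ * w * c) '' C = C := by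
      apply Set.Subset.antisymm
      · rintro _ ⟨w, ⟨g, rfl⟩, rfl⟩
        exact ⟨g * c, by group⟩
      · rintro w ⟨g, rfl⟩
        exact ⟨c * (g⁻¹ * x * g) * c⁻¹, ⟨g * c⁻¹, by group⟩, by group⟩
    have hinj : Function.Injective fun w : G => c⁻¹ * w * c := fun u v huv => by
      simpa using mul_left_cancel (mul_right_cancel huv)
    have := (hz.map (hconj c).continuousAt hinj)
    rw [Filter.map_principal, hmap] at this
    have hzy : c⁻¹ * z * c = y := by rw [ha, hb, hc]; group
    rwa [hzy] at this
  have hperf : Perfect C := ⟨hclosed, hpre⟩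
  have := aux_continuum_le_of_perfect_compact hperf ⟨x, hxC⟩ hcomp
  exact absurd h (not_lt.2 this)
end

section
/- Let G be a profinite group and let x ∈ G. If the conjugacy class of x has fewer than 2^ℵ₀ elements, then the centralizer C_G(x) is an open subgroup of G. -/
open Cardinal Set

section aux

variable {α : Type*} [TopologicalSpace α] [T25Space α]

/-- A nonempty compact perfect set in a T2.5 space has cardinality at least continuum. -/
theorem perfect_compact_continuum_le {C : Set α} (hC : Perfect C) (hne : C.Nonempty)
    (hcomp : IsCompact C) : Cardinal.continuum ≤ Cardinal.mk C := by
  classical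
  -- type of perfect nonempty subsets of C
  let P := {s : Set α // Perfect s ∧ s.Nonempty ∧ s ⊆ C}
  have split : ∀ p : P, ∃ q : Bool → P,
      (∀ b, (q b).1 ⊆ p.1) ∧ Disjoint (q false).1 (q true).1 := by
    rintro ⟨s, hs, hsne, hsC⟩
    obtain ⟨C₀, C₁, ⟨h₀, h₀ne, h₀s⟩, ⟨h₁, h₁ne, h₁s⟩, hdisj⟩ := hs.splitting hsne
    refine ⟨fun b => if b then ⟨C₁, h₁, h₁ne, h₁s.trans hsC⟩ else ⟨C₀, h₀, h₀ne, h₀s.trans hsC⟩,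
      ?_, ?_⟩
    · intro b; cases b <;> simpa using by first | exact h₀s | exact h₁s
    · simpa using hdisj
  choose q hqsub hqdisj using split
  -- scheme indexed by lists of booleans
  let D : List Bool → P := fun l => l.foldr (fun b p => q p b) ⟨C, hC, hne, subset_rfl⟩
  have hD_cons : ∀ (b : Bool) (l : List Bool), (D (b :: l)).1 ⊆ (D l).1 := by
    intro b l; exact hqsub (D l) b
  -- prefixes
  let pre : (ℕ → Bool) → ℕ → List Bool := fun f n => Nat.rec [] (fun m l => f m :: l) n
  have pre_eq : ∀ (f g : ℕ → Bool) (n : ℕ), (∀ m < n, f m = g m) → pre f n = pre g n := by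
    intro f g n
    induction n with
    | zero => intro _; rfl
    | succ m ih =>
      intro h
      show f m :: pre f m = g m :: pre g m
      rw [h m (Nat.lt_succ_self m), ih (fun k hk => h k (hk.trans (Nat.lt_succ_self m)))]
  -- the nested sets
  have hK_closed : ∀ l, IsClosed (D l).1 := fun l => (D l).2.1.closed
  have hK_ne : ∀ l, (D l).1.Nonempty := fun l => (D l).2.2.1
  have hK_sub : ∀ l, (D l).1 ⊆ C := fun l => (D l).2.2.2
  have hK_compact : ∀ l, IsCompact (D l).1 := fun l =>
    hcomp.of_isClosed_subset (hK_closed l) (hK_sub l)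
  have key : ∀ f : ℕ → Bool, (⋂ n, (D (pre f n)).1).Nonempty := by
    intro f
    apply IsCompact.nonempty_iInter_of_sequence_nonempty_isCompact_isClosed
      (fun n => (D (pre f n)).1)
    · intro n; exact hD_cons (f n) (pre f n)
    · intro n; exact hK_ne _
    · exact hK_compact _
    · intro n; exact hK_closed _
  choose x hx using key
  have hxmem : ∀ (f : ℕ → Bool) (n : ℕ), x f ∈ (D (pre f n)).1 := by
    intro f n; exact mem_iInter.1 (hx f) n
  have hxC : ∀ f, x f ∈ C := fun f => hK_sub _ (hxmem f 0)
  have hinj : Function.Injective (fun f : ℕ → Bool => (⟨x f, hxC f⟩ : C)) := by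
    intro f g hfg
    simp only [Subtype.mk.injEq] at hfg
    by_contra hne'
    have hex : ∃ n, f n ≠ g n := by
      by_contra h; push_neg at h; exact hne' (funext h)
    let n := Nat.find hex
    have hn : f n ≠ g n := Nat.find_spec hex
    have hlt : ∀ m < n, f m = g m := fun m hm => by
      by_contra h; exact (Nat.find_min hex hm) h
    have hpre : pre f n = pre g n := pre_eq f g n hlt
    have h1 : x f ∈ (D (f n :: pre f n)).1 := hxmem f (n + 1)
    have h2 : x g ∈ (D (g n :: pre f n)).1 := by
      have := hxmem g (n + 1)
      rwa [show pre g (n + 1) = g n :: pre g n from rfl, ← hpre] at this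
    rw [hfg] at h1
    have : Disjoint (D (false :: pre f n)).1 (D (true :: pre f n)).1 := hqdisj (D (pre f n))
    cases hf : f n <;> cases hg : g n
    · exact hn (hf.trans hg.symm)
    · rw [hf] at h1; rw [hg] at h2
      exact this.ne_of_mem h1 h2 rfl
    · rw [hf] at h1; rw [hg] at h2
      exact this.ne_of_mem h2 h1 rfl
    · exact hn (hf.trans hg.symm)
  have : Cardinal.lift.{u_1} (Cardinal.mk (ℕ → Bool)) ≤ Cardinal.lift.{0} (Cardinal.mk C) :=
    Cardinal.lift_mk_le'.2 ⟨⟨_, hinj⟩⟩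
  have hmk : Cardinal.mk (ℕ → Bool) = Cardinal.continuum := by
    rw [← Cardinal.two_power_aleph0]
    simp [Cardinal.mk_arrow]
  rw [hmk, Cardinal.lift_continuum] at this
  simpa using this

end aux

/-- In a profinite group, if the conjugacy class of `x` has fewer than `2^ℵ₀` elements,
then the centralizer of `x` is open. -/
theorem stmt2 {G : Type*} [Group G] [TopologicalSpace G] [IsTopologicalGroup G]
    [CompactSpace G] [T2Space G] [TotallyDisconnectedSpace G] (x : G)
    (h : Cardinal.mk ↥{y : G | ∃ g : G, y = g⁻¹ * x * g} < Cardinal.continuum) :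
    IsOpen ((Subgroup.centralizer {x} : Subgroup G) : Set G) := by
  set S : Set G := {y : G | ∃ g : G, y = g⁻¹ * x * g} with hS
  have hSrange : S = Set.range (fun g : G => g⁻¹ * x * g) := by
    ext y; simp [hS, eq_comm, Set.mem_setOf_eq]
  have hcont : Continuous (fun g : G => g⁻¹ * x * g) := by continuity
  have hScompact : IsCompact S := by
    rw [hSrange]; exact isCompact_range hcont
  have hSclosed : IsClosed S := hScompact.isClosed
  have hSne : S.Nonempty := ⟨x, 1, by simp⟩
  -- S is not perfect
  have hnotperf : ¬ Perfect S := by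
    intro hperf
    exact absurd (perfect_compact_continuum_le hperf hSne hScompact) (not_le.2 h)
  have hnotpre : ¬ Preperfect S := fun hp => hnotperf ⟨hSclosed, hp⟩
  rw [preperfect_iff_nhds] at hnotpre
  push_neg at hnotpre
  obtain ⟨y, hyS, U, hU, hUy⟩ := hnotpre
  -- hUy : ∀ z ∈ U ∩ S, z = y
  obtain ⟨g, rfl⟩ := hyS
  -- conjugation homeomorphism z ↦ g * z * g⁻¹ sends y to x and S to S
  let c : G ≃ₜ G := (Homeomorph.mulLeft g).trans (Homeomorph.mulRight g⁻¹)
  have hc : ∀ z, c z = g * z * g⁻¹ := fun z => rfl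
  have hcy : c (g⁻¹ * x * g) = x := by simp [hc, mul_assoc]
  have hU' : c '' U ∈ nhds x := by
    rw [← hcy, ← c.map_nhds_eq]
    exact Filter.image_mem_map hU
  -- preimage of isolated nbhd under the orbit map
  have hV : (fun h : G => h⁻¹ * x * h) ⁻¹' (c '' U) ∈ nhds (1 : G) := by
    apply hcont.continuousAt.preimage_mem_nhds
    simpa using hU'
  apply Subgroup.isOpen_of_mem_nhds (Subgroup.centralizer {x}) (g := 1)
  apply Filter.mem_of_superset hV
  intro k hk
  simp only [Set.mem_preimage] at hk
  obtain ⟨w, hwU, hw⟩ := hk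
  -- hw : c w = k⁻¹ * x * k, i.e. g * w * g⁻¹ = k⁻¹ * x * k
  rw [hc] at hw
  have hw' : w = g⁻¹ * (k⁻¹ * x * k) * g := by
    rw [← hw]; group
  have hwS : w ∈ S := by
    refine ⟨k * g, ?_⟩
    rw [hw']; group
  have hwy : w = g⁻¹ * x * g := hUy w ⟨hwU, hwS⟩
  have hfix : k⁻¹ * x * k = x := by
    rw [hwy] at hw'
    have : g * (g⁻¹ * x * g) * g⁻¹ = g * (g⁻¹ * (k⁻¹ * x * k) * g) * g⁻¹ := by rw [← hw']
    calc k⁻¹ * x * k = g * (g⁻¹ * (k⁻¹ * x * k) * g) * g⁻¹ := by group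
    _ = g * (g⁻¹ * x * g) * g⁻¹ := this.symm
    _ = x := by group
  have hxk : x * k = k * x := by
    have := congrArg (fun z => k * z) hfix
    simpa [mul_assoc] using this
  rw [SetLike.mem_coe, Subgroup.mem_centralizer_iff]
  intro z hz
  rw [Set.mem_singleton_iff] at hz
  subst hz
  exact hxk
end

section
/- Let G be a profinite group such that for some positive integer m the set {g^m : g ∈ G} of m-th powers has cardinality less than 2^ℵ₀. Then every element of G has finite order, i.e. G is periodic (torsion). -/
open Cardinal Set

/-- In a compact Hausdorff perfect nonempty space, the cardinality is at least continuum. -/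
lemma aux_continuum_le {X : Type*} [TopologicalSpace X] [T2Space X] [CompactSpace X]
    [PerfectSpace X] [Nonempty X] : Cardinal.continuum ≤ Cardinal.mk X := by
  -- choose splitting function
  have hsplit : ∀ V : Set X, Perfect V → V.Nonempty →
      ∃ p : Bool → Set X, (∀ b, Perfect (p b) ∧ (p b).Nonempty ∧ p b ⊆ V) ∧
        Disjoint (p false) (p true) := by
    intro V hV hVne
    obtain ⟨C₀, C₁, h₀, h₁, hd⟩ := hV.splitting hVne
    exact ⟨fun b => if b then C₁ else C₀, by rintro (_|_) <;> simpa, by simpa⟩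
  choose! p hp hd using hsplit
  -- the tree of sets
  let D : List Bool → Set X := fun s => s.foldr (fun b V => p V b) Set.univ
  have hD : ∀ s, Perfect (D s) ∧ (D s).Nonempty := by
    intro s
    induction s with
    | nil => exact ⟨PerfectSpace.univ_perfect X, univ_nonempty⟩
    | cons b s ih => exact ⟨(hp _ ih.1 ih.2 b).1, (hp _ ih.1 ih.2 b).2.1⟩
  have hDsub : ∀ b s, D (b :: s) ⊆ D s := fun b s => (hp _ (hD s).1 (hD s).2 b).2.2
  -- prefixes
  let L : (ℕ → Bool) → ℕ → List Bool := fun f n => Nat.rec [] (fun k l => f k :: l) n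
  have hLmono : ∀ f n, D (L f (n + 1)) ⊆ D (L f n) := fun f n => hDsub _ _
  have hLanti : ∀ f, Antitone fun n => D (L f n) := fun f =>
    antitone_nat_of_succ_le fun n => hLmono f n
  have hne : ∀ f : ℕ → Bool, (⋂ n, D (L f n)).Nonempty := by
    intro f
    apply IsCompact.nonempty_iInter_of_sequence_nonempty_isCompact_isClosed
    · exact hLmono f
    · exact fun n => (hD _).2
    · exact (hD (L f 0)).1.closed.isCompact
    · exact fun n => (hD _).1.closed
  choose x hx using hne
  have hxmem : ∀ f n, x f ∈ D (L f n) := fun f n => mem_iInter.1 (hx f) n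
  have hinj : Function.Injective x := by
    intro f g hfg
    by_contra hne'
    have hex : ∃ n, f n ≠ g n := Function.ne_iff.1 hne'
    classical
    set n := Nat.find hex with hn
    have hLeq : L f n = L g n := by
      have : ∀ k ≤ n, L f k = L g k := by
        intro k hk
        induction k with
        | zero => rfl
        | succ j ih =>
          have hj : f j = g j := by
            by_contra hc
            have hle : Nat.find hex ≤ j := Nat.find_le hc
            omega
          show f j :: L f j = g j :: L g j
          rw [hj, ih (by omega)]
      exact this n le_rfl
    have hfgn : f n ≠ g n := Nat.find_spec hex
    have h1 : x f ∈ D (f n :: L f n) := hxmem f (n + 1)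
    have h2 : x g ∈ D (g n :: L f n) := by
      have h2' : x g ∈ D (g n :: L g n) := hxmem g (n + 1)
      rwa [← hLeq] at h2'
    rw [hfg] at h1
    have hdisj : Disjoint (D (false :: L f n)) (D (true :: L f n)) :=
      hd _ (hD (L f n)).1 (hD (L f n)).2
    cases hb : f n <;> cases hb' : g n
    · exact hfgn (by rw [hb, hb'])
    · rw [hb] at h1; rw [hb'] at h2
      exact hdisj.ne_of_mem h1 h2 rfl
    · rw [hb] at h1; rw [hb'] at h2
      exact hdisj.ne_of_mem h2 h1 rfl
    · exact hfgn (by rw [hb, hb'])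
  have hemb : Cardinal.lift.{_} (Cardinal.mk (ℕ → Bool)) ≤ Cardinal.lift.{0} (Cardinal.mk X) :=
    Cardinal.lift_mk_le'.2 ⟨⟨x, hinj⟩⟩
  have hcb : Cardinal.mk (ℕ → Bool) = Cardinal.continuum := by
    rw [Cardinal.mk_arrow, Cardinal.mk_bool, Cardinal.mk_nat, Cardinal.lift_id, Cardinal.lift_id]
    exact Cardinal.two_power_aleph0
  rw [hcb] at hemb
  simpa using hemb

/-- An infinite compact Hausdorff topological group has cardinality at least continuum. -/
lemma aux_group_continuum_le {K : Type*} [Group K] [TopologicalSpace K] [IsTopologicalGroup K]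
    [CompactSpace K] [T2Space K] [Infinite K] : Cardinal.continuum ≤ Cardinal.mk K := by
  have hperf : PerfectSpace K := by
    rw [perfectSpace_iff_forall_not_isolated]
    intro y
    by_contra hy
    rw [Filter.not_neBot, ← isOpen_singleton_iff_punctured_nhds] at hy
    have : ∀ z : K, IsOpen ({z} : Set K) := by
      intro z
      have : ({z} : Set K) = (Homeomorph.mulLeft (z * y⁻¹)) '' {y} := by
        simp
      rw [this]
      exact (Homeomorph.mulLeft (z * y⁻¹)).isOpenMap _ hy
    have : DiscreteTopology K := discreteTopology_iff_isOpen_singleton.2 this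
    have hfin : Finite K := finite_of_compact_of_discrete
    exact not_finite K
  exact aux_continuum_le

/-- If, for some positive integer `m`, a profinite group has fewer than `2^ℵ₀`
`m`-th powers, then the group is periodic (torsion). -/
theorem stmt4 {G : Type*} [Group G] [TopologicalSpace G] [IsTopologicalGroup G]
    [CompactSpace G] [T2Space G] [TotallyDisconnectedSpace G] (m : ℕ) (hm : 0 < m)
    (h : Cardinal.mk ↥{x : G | ∃ g : G, g ^ m = x} < Cardinal.continuum) :
    ∀ g : G, IsOfFinOrder g := by
  intro g
  by_contra hg
  set S : Set G := {x : G | ∃ g : G, g ^ m = x} with hS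
  have hScl : IsClosed S := by
    have : S = (fun x : G => x ^ m) '' Set.univ := by
      ext x; simp [hS, eq_comm]
    rw [this]
    exact (isCompact_univ.image (continuous_pow m)).isClosed
  have hgm : ¬ IsOfFinOrder (g ^ m) := fun hfin => hg (hfin.of_pow hm.ne')
  set K : Subgroup G := (Subgroup.zpowers (g ^ m)).topologicalClosure with hK
  have hKS : (K : Set G) ⊆ S := by
    apply closure_minimal _ hScl
    rintro x ⟨k, rfl⟩
    exact ⟨g ^ k, by rw [← zpow_natCast (g ^ k) m, ← zpow_mul, mul_comm, zpow_mul, zpow_natCast]⟩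
  have hKinf : Infinite K := by
    have h1 : ((Subgroup.zpowers (g ^ m)) : Set G).Infinite := infinite_zpowers.2 hgm
    have h2 : ((K : Subgroup G) : Set G).Infinite :=
      h1.mono (Subgroup.le_topologicalClosure _)
    exact h2.to_subtype
  have hKcomp : CompactSpace K :=
    isCompact_iff_compactSpace.1 (Subgroup.isClosed_topologicalClosure _).isCompact
  have := aux_group_continuum_le (K := K)
  have hle : Cardinal.mk K ≤ Cardinal.mk S := Cardinal.mk_le_mk_of_subset hKS
  exact absurd ((this.trans hle)) (not_le.2 h)
end

section
/- Let G be a profinite group and let N be a closed normal subgroup of G that is topologically generated by finitely many elements g₁, …, g_r, each of which has an open centralizer in G. Then the quotient G / C_G(N) is finite, and consequently (by Schur's theorem) the commutator subgroup [N, N] of N is finite. -/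
open Subgroup
open scoped commutatorElement

/-- Schur-type helper: if the center has finite index, the commutator set is finite. -/
lemma finite_commutatorSet_of_finiteIndex_center (H : Type*) [Group H]
    [(Subgroup.center H).FiniteIndex] : Finite (commutatorSet H) := by
  haveI : Finite (H ⧸ Subgroup.center H) := Subgroup.finite_quotient_of_finiteIndex
  set Q := H ⧸ Subgroup.center H
  have conj : ∀ (c : H), (∀ y, y * c = c * y) → ∀ u x : H, (u * c) * x * (u * c)⁻¹ = u * x * u⁻¹ := by
    intro c hc u x
    rw [mul_inv_rev]
    calc u * c * x * (c⁻¹ * u⁻¹) = u * (c * x * c⁻¹) * u⁻¹ := by group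
      _ = u * (x * c * c⁻¹) * u⁻¹ := by rw [← hc x]
      _ = u * x * u⁻¹ := by group
  have h2 : ∀ (c : H), (∀ y, y * c = c * y) → ∀ u v : H,
      u * (v * c) * u⁻¹ * (v * c)⁻¹ = u * v * u⁻¹ * v⁻¹ := by
    intro c hc u v
    rw [mul_inv_rev]
    calc u * (v * c) * u⁻¹ * (c⁻¹ * v⁻¹) = u * v * (c * u⁻¹ * c⁻¹) * v⁻¹ := by group
      _ = u * v * (u⁻¹ * c * c⁻¹) * v⁻¹ := by rw [← hc u⁻¹]
      _ = u * v * u⁻¹ * v⁻¹ := by group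
  have key : ∀ a b a' b' : H, (a : Q) = a' → (b : Q) = b' → ⁅a, b⁆ = ⁅a', b'⁆ := by
    intro a b a' b' ha hb
    rw [QuotientGroup.eq] at ha hb
    obtain ⟨z, hzm, rfl⟩ : ∃ z ∈ Subgroup.center H, a' = a * z := ⟨a⁻¹ * a', ha, by group⟩
    obtain ⟨w, hwm, rfl⟩ : ∃ w ∈ Subgroup.center H, b' = b * w := ⟨b⁻¹ * b', hb, by group⟩
    have hzc := Subgroup.mem_center_iff.mp hzm
    have hwc := Subgroup.mem_center_iff.mp hwm
    simp only [commutatorElement_def]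
    rw [conj z hzc a (b * w), h2 w hwc a b]
  let f : Q → Q → H := Quotient.lift₂ (fun a b => ⁅a, b⁆) (by
    intro a b a' b' ha hb
    exact key a b a' b' (Quotient.sound ha) (Quotient.sound hb))
  have hsub : commutatorSet H ⊆ Set.range (fun p : Q × Q => f p.1 p.2) := by
    rintro x ⟨a, b, rfl⟩
    exact ⟨((a : Q), (b : Q)), rfl⟩
  exact (Set.finite_range _).subset hsub

/-- If a closed normal subgroup `N` of a profinite group `G` is topologically generated
by finitely many elements, each with open centralizer, then `C_G(N)` has finite index
in `G`, and consequently the commutator subgroup `[N,N]` is finite (Schur). -/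
theorem stmt5 {G : Type*} [Group G] [TopologicalSpace G] [IsTopologicalGroup G]
    [CompactSpace G] [T2Space G] [TotallyDisconnectedSpace G]
    (N : Subgroup G) [N.Normal] (hNc : IsClosed (N : Set G))
    (r : ℕ) (g : Fin r → G) (hgN : ∀ i, g i ∈ N)
    (hgen : (Subgroup.closure (Set.range g)).topologicalClosure = N)
    (hcent : ∀ i, IsOpen ((Subgroup.centralizer {g i} : Subgroup G) : Set G)) :
    (Subgroup.centralizer (N : Set G)).FiniteIndex ∧ Finite ↥⁅N, N⁆ := by
  -- Step 1: C_G(N) = ⋂ᵢ C_G(gᵢ)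
  have hEq : Subgroup.centralizer (N : Set G) = ⨅ i, Subgroup.centralizer {g i} := by
    apply le_antisymm
    · exact le_iInf fun i => Subgroup.centralizer_le
        (Set.singleton_subset_iff.mpr (hgN i))
    · intro x hx
      -- x commutes with every gᵢ, hence centralizer {x} is a closed subgroup containing N
      have hclosed : IsClosed ((Subgroup.centralizer {x} : Subgroup G) : Set G) := by
        have : ((Subgroup.centralizer {x} : Subgroup G) : Set G) = {y : G | x * y = y * x} := by
          ext y; exact Subgroup.mem_centralizer_singleton_iff.trans eq_comm
        rw [this]
        exact isClosed_eq (continuous_const.mul continuous_id) (continuous_id.mul continuous_const)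
      have hle : Subgroup.closure (Set.range g) ≤ Subgroup.centralizer {x} := by
        rw [Subgroup.closure_le]
        rintro _ ⟨i, rfl⟩
        have hxi : x ∈ Subgroup.centralizer {g i} := by
          have := Subgroup.mem_iInf.mp hx i
          exact this
        rw [SetLike.mem_coe, Subgroup.mem_centralizer_singleton_iff]
        exact (Subgroup.mem_centralizer_singleton_iff.mp hxi).symm
      have hNle : N ≤ Subgroup.centralizer {x} := by
        rw [← hgen]
        exact Subgroup.topologicalClosure_minimal _ hle hclosed
      rw [Subgroup.mem_centralizer_iff]
      intro h hh
      exact Subgroup.mem_centralizer_singleton_iff.mp (hNle hh)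
  -- Step 2: the intersection is open, hence finite index
  have hopen : IsOpen ((Subgroup.centralizer (N : Set G) : Subgroup G) : Set G) := by
    rw [hEq]
    have : ((⨅ i, Subgroup.centralizer {g i} : Subgroup G) : Set G)
        = ⋂ i, ((Subgroup.centralizer {g i} : Subgroup G) : Set G) := by
      simp [Subgroup.coe_iInf]
    rw [this]
    exact isOpen_iInter_of_finite hcent
  haveI hFI : (Subgroup.centralizer (N : Set G)).FiniteIndex := by
    haveI := Subgroup.quotient_finite_of_isOpen _ hopen
    exact Subgroup.finiteIndex_of_finite_quotient
  refine ⟨hFI, ?_⟩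
  -- Step 3: the center of N has finite index in N
  haveI : ((Subgroup.centralizer (N : Set G)).subgroupOf N).FiniteIndex :=
    Subgroup.instFiniteIndex_subgroupOf _ _
  haveI hZ : (Subgroup.center ↥N).FiniteIndex := by
    apply Subgroup.finiteIndex_of_le
      (H := (Subgroup.centralizer (N : Set G)).subgroupOf N)
    intro n hn
    rw [Subgroup.mem_subgroupOf] at hn
    rw [Subgroup.mem_center_iff]
    intro m
    exact Subtype.ext (hn m.1 m.2)
  -- Step 4: Schur's theorem: [N,N] is finite
  haveI : Finite (commutatorSet ↥N) := finite_commutatorSet_of_finiteIndex_center ↥N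
  haveI : Finite (commutator ↥N) := inferInstance
  have hmap : ⁅N, N⁆ = Subgroup.map N.subtype (commutator ↥N) := by
    rw [commutator_def, Subgroup.map_commutator, ← MonoidHom.range_eq_map, N.range_subtype]
  rw [hmap]
  have hfin : ((Subgroup.map N.subtype (_root_.commutator ↥N)) : Set G).Finite := by
    rw [Subgroup.coe_map]
    exact Set.Finite.image _ (Set.toFinite _)
  exact hfin.to_subtype
end

section
/- Let H be a procyclic group (a profinite group that is topologically generated by a single element). If the set of topological generators of H has cardinality less than 2^ℵ₀, then H is finite. -/
open Subgroup

section NT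

/-- lift a unit mod `n` to a unit mod `m`. -/
lemma nt_lift {n m : ℕ} (hm : 0 < m) (hnm : n ∣ m) {a : ℕ} (ha : a.Coprime n) :
    ∃ b : ℕ, b.Coprime m ∧ b ≡ a [MOD n] := by
  haveI : NeZero m := ⟨hm.ne'⟩
  haveI : NeZero n := ⟨(Nat.pos_of_dvd_of_pos hnm hm).ne'⟩
  obtain ⟨x, hx⟩ := ZMod.unitsMap_surjective hnm (ZMod.unitOfCoprime a ha)
  refine ⟨(x : ZMod m).val, ZMod.val_coe_unit_coprime x, ?_⟩
  rw [← ZMod.natCast_eq_natCast_iff]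
  have : (((x : ZMod m).val : ℕ) : ZMod n) = ZMod.cast (x : ZMod m) := ZMod.natCast_val _
  rw [this]
  have h2 : ZMod.cast (x : ZMod m) = ((ZMod.unitsMap hnm x : (ZMod n)ˣ) : ZMod n) := by
    rw [ZMod.unitsMap_def, Units.coe_map]
    simp [ZMod.castHom_apply]
  rw [h2, hx, ZMod.coe_unitOfCoprime]

/-- two distinct lifts when the totient grows. -/
lemma nt_lift2 {n m : ℕ} (hm : 0 < m) (hnm : n ∣ m) (hφ : Nat.totient n < Nat.totient m)
    {a : ℕ} (ha : a.Coprime n) :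
    ∃ b c : ℕ, b.Coprime m ∧ c.Coprime m ∧ b ≡ a [MOD n] ∧ c ≡ a [MOD n] ∧ ¬ b ≡ c [MOD m] := by
  haveI : NeZero m := ⟨hm.ne'⟩
  haveI : NeZero n := ⟨(Nat.pos_of_dvd_of_pos hnm hm).ne'⟩
  obtain ⟨x, hx⟩ := ZMod.unitsMap_surjective hnm (ZMod.unitOfCoprime a ha)
  have hni : ¬ Function.Injective (ZMod.unitsMap hnm) := by
    intro hinj
    have := Fintype.card_le_of_injective _ hinj
    rw [ZMod.card_units_eq_totient, ZMod.card_units_eq_totient] at this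
    omega
  rw [Function.not_injective_iff] at hni
  obtain ⟨x₁, x₂, hx12, hne⟩ := hni
  set z : (ZMod m)ˣ := x₁ * x₂⁻¹ with hz
  have hz1 : z ≠ 1 := by
    intro h
    exact hne (by rwa [mul_inv_eq_one] at h)
  have hzk : ZMod.unitsMap hnm z = 1 := by
    rw [hz, map_mul, map_inv, hx12, mul_inv_cancel]
  have key : ∀ y : (ZMod m)ˣ, ZMod.unitsMap hnm y = ZMod.unitOfCoprime a ha →
      ((y : ZMod m).val).Coprime m ∧ (y : ZMod m).val ≡ a [MOD n] := by
    intro y hy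
    refine ⟨ZMod.val_coe_unit_coprime y, ?_⟩
    rw [← ZMod.natCast_eq_natCast_iff]
    have h1 : (((y : ZMod m).val : ℕ) : ZMod n) = ZMod.cast (y : ZMod m) := ZMod.natCast_val _
    have h2 : ZMod.cast (y : ZMod m) = ((ZMod.unitsMap hnm y : (ZMod n)ˣ) : ZMod n) := by
      rw [ZMod.unitsMap_def, Units.coe_map]
      simp [ZMod.castHom_apply]
    rw [h1, h2, hy, ZMod.coe_unitOfCoprime]
  have k1 := key x hx
  have k2 := key (x * z) (by rw [map_mul, hzk, hx, mul_one])
  refine ⟨(x : ZMod m).val, ((x * z : (ZMod m)ˣ) : ZMod m).val, k1.1, k2.1, k1.2, k2.2, ?_⟩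
  intro hbc
  rw [← ZMod.natCast_eq_natCast_iff] at hbc
  rw [ZMod.natCast_val, ZMod.natCast_val, ZMod.cast_id, ZMod.cast_id] at hbc
  exact hz1 (by
    have : x = x * z := Units.ext hbc
    nth_rewrite 1 [← mul_one x] at this
    exact (mul_left_cancel this).symm)

/-- a number with small totient is bounded. -/
lemma nt_totient_bound {k m : ℕ} (hm : 0 < m) (h : m.totient ≤ k) : m ≤ (2*k)^(2*k+1) := by
  have hk : 1 ≤ k := le_trans (Nat.totient_pos.2 hm) h
  have hpp : ∀ p ∈ m.primeFactors, p ^ m.factorization p ≤ 2 * k := by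
    intro p hp
    have hprime : p.Prime := Nat.prime_of_mem_primeFactors hp
    have hfp : 0 < m.factorization p :=
      Nat.Prime.factorization_pos_of_dvd hprime hm.ne' (Nat.dvd_of_mem_primeFactors hp)
    have hdvd : (p ^ m.factorization p).totient ∣ m.totient :=
      Nat.totient_dvd_of_dvd (Nat.ordProj_dvd m p)
    have hle : (p ^ m.factorization p).totient ≤ k :=
      le_trans (Nat.le_of_dvd (Nat.totient_pos.2 hm) hdvd) h
    rw [Nat.totient_prime_pow hprime hfp] at hle
    have hp2 : 2 ≤ p := hprime.two_le
    calc p ^ m.factorization p = p ^ (m.factorization p - 1) * p := by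
          rw [← pow_succ]; congr 1; omega
      _ ≤ p ^ (m.factorization p - 1) * ((p-1) * 2) := by
          apply Nat.mul_le_mul_left; omega
      _ = 2 * (p ^ (m.factorization p - 1) * (p - 1)) := by ring
      _ ≤ 2 * k := by omega
  have hsub : m.primeFactors ⊆ Finset.range (2*k+1) := by
    intro p hp
    have : p ≤ p ^ m.factorization p := Nat.le_self_pow (by
      have := Nat.Prime.factorization_pos_of_dvd (Nat.prime_of_mem_primeFactors hp) hm.ne'
        (Nat.dvd_of_mem_primeFactors hp)
      omega) p
    have := hpp p hp
    simp only [Finset.mem_range]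
    omega
  calc m = m.factorization.prod (· ^ ·) := (Nat.factorization_prod_pow_eq_self hm.ne').symm
    _ = ∏ p ∈ m.primeFactors, p ^ m.factorization p := by
        rw [Finsupp.prod, Nat.support_factorization]
    _ ≤ (2*k) ^ m.primeFactors.card := Finset.prod_le_pow_card _ _ _ hpp
    _ ≤ (2*k) ^ (2*k+1) := by
        apply Nat.pow_le_pow_right (by omega)
        calc m.primeFactors.card ≤ (Finset.range (2*k+1)).card := Finset.card_le_card hsub
          _ = 2*k+1 := Finset.card_range _

/-- coprime power of a generator is a generator. -/
lemma pow_gen {G : Type*} [Group G] [Finite G] {g : G} (hg : zpowers g = ⊤) {b : ℕ}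
    (hb : b.Coprime (orderOf g)) : zpowers (g ^ b) = ⊤ := by
  have hcard : orderOf g = Nat.card G :=
    orderOf_eq_card_of_forall_mem_zpowers (by intro x; rw [hg]; trivial)
  apply Subgroup.eq_top_of_card_eq
  rw [Nat.card_zpowers, orderOf_pow, Nat.Coprime.gcd_eq_one, Nat.div_one, hcard]
  exact (Nat.coprime_comm.mp hb)

end NT

section TopPart

variable {H : Type*} [Group H] [TopologicalSpace H] [IsTopologicalGroup H]
  [CompactSpace H] [T2Space H] [TotallyDisconnectedSpace H]

lemma aux_exists_onsub {U : Set H} (hU : IsOpen U) (h1 : (1:H) ∈ U) :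
    ∃ N : OpenNormalSubgroup H, (N : Set H) ⊆ U := by
  obtain ⟨W, hW, h1W, hWU⟩ := compact_exists_isClopen_in_isOpen hU h1
  obtain ⟨N, hN⟩ := IsTopologicalGroup.exist_openNormalSubgroup_sub_clopen_nhds_of_one hW h1W
  exact ⟨N, hN.trans hWU⟩

lemma coset_clopen (N : OpenNormalSubgroup H) (y : H) :
    IsClopen {z : H | (QuotientGroup.mk z : H ⧸ N.toSubgroup) = QuotientGroup.mk y} := by
  have hset : {z : H | (QuotientGroup.mk z : H ⧸ N.toSubgroup) = QuotientGroup.mk y}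
      = (fun z : H => z⁻¹ * y) ⁻¹' (N.toSubgroup : Set H) := by
    ext z
    simp only [Set.mem_setOf_eq, Set.mem_preimage, SetLike.mem_coe]
    exact QuotientGroup.eq
  rw [hset]
  have hc : Continuous (fun z : H => z⁻¹ * y) := by continuity
  exact ⟨(N.toSubgroup.isClosed_of_isOpen N.isOpen).preimage hc, N.isOpen.preimage hc⟩

lemma preimage_isClopen (N : OpenNormalSubgroup H) (A : Set (H ⧸ N.toSubgroup)) :
    IsClopen ((QuotientGroup.mk : H → H ⧸ N.toSubgroup) ⁻¹' A) := by
  have key : ∀ B : Set (H ⧸ N.toSubgroup),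
      IsOpen ((QuotientGroup.mk : H → H ⧸ N.toSubgroup) ⁻¹' B) := by
    intro B
    rw [isOpen_iff_forall_mem_open]
    intro y hy
    refine ⟨{z : H | (QuotientGroup.mk z : H ⧸ N.toSubgroup) = QuotientGroup.mk y}, ?_,
      (coset_clopen N y).isOpen, rfl⟩
    intro z hz
    simp only [Set.mem_setOf_eq] at hz
    simp only [Set.mem_preimage] at hy ⊢
    rwa [hz]
  refine ⟨?_, key A⟩
  rw [← isOpen_compl_iff, ← Set.preimage_compl]
  exact key Aᶜ

lemma gens_iff (N : Subgroup H) [N.Normal] (y : H) :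
    Subgroup.closure {y} ⊔ N = ⊤ ↔ zpowers (QuotientGroup.mk y : H ⧸ N) = ⊤ := by
  rw [← zpowers_eq_closure]
  constructor
  · intro h
    rw [eq_top_iff']
    intro q
    obtain ⟨z, rfl⟩ := QuotientGroup.mk_surjective q
    have hz : z ∈ ((zpowers y ⊔ N : Subgroup H) : Set H) := by rw [h]; trivial
    rw [Subgroup.mul_normal] at hz
    obtain ⟨a, ha, n, hn, rfl⟩ := hz
    obtain ⟨k, rfl⟩ := mem_zpowers_iff.mp ha
    have : (QuotientGroup.mk (y ^ k * n) : H ⧸ N) = (QuotientGroup.mk y : H ⧸ N) ^ k := by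
      rw [QuotientGroup.mk_mul, (QuotientGroup.eq_one_iff n).mpr hn, mul_one,
        QuotientGroup.mk_zpow]
    rw [this]
    exact zpow_mem (mem_zpowers _) k
  · intro h
    rw [eq_top_iff']
    intro z
    have hz : (QuotientGroup.mk z : H ⧸ N) ∈ zpowers (QuotientGroup.mk y : H ⧸ N) := by
      rw [h]; trivial
    obtain ⟨k, hk⟩ := mem_zpowers_iff.mp hz
    rw [← QuotientGroup.mk_zpow] at hk
    have hmem : (y ^ k)⁻¹ * z ∈ N := QuotientGroup.eq.mp hk
    have : z = y ^ k * ((y ^ k)⁻¹ * z) := by group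
    rw [this]
    exact Subgroup.mul_mem_sup (zpow_mem (mem_zpowers _) k) hmem

lemma mem_S_iff (y : H) :
    (Subgroup.closure {y}).topologicalClosure = ⊤ ↔
      ∀ N : OpenNormalSubgroup H, Subgroup.closure {y} ⊔ N.toSubgroup = ⊤ := by
  constructor
  · intro h N
    have hopen : IsOpen ((Subgroup.closure {y} ⊔ N.toSubgroup : Subgroup H) : Set H) :=
      Subgroup.isOpen_mono le_sup_right N.isOpen
    have hclosed := Subgroup.isClosed_of_isOpen _ hopen
    have := Subgroup.topologicalClosure_minimal (Subgroup.closure {y}) le_sup_left hclosed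
    rw [h] at this
    exact top_le_iff.mp this
  · intro h
    by_contra hne
    obtain ⟨z, -, hz⟩ := SetLike.exists_of_lt
      (lt_top_iff_ne_top.mpr hne : (Subgroup.closure {y}).topologicalClosure < ⊤)
    have hU : IsOpen {w : H | z * w ∉ (Subgroup.closure {y}).topologicalClosure} := by
      have : {w : H | z * w ∉ (Subgroup.closure {y}).topologicalClosure}
          = (fun w : H => z * w) ⁻¹' ((Subgroup.closure {y}).topologicalClosure : Set H)ᶜ := rfl
      rw [this]
      exact (Subgroup.isClosed_topologicalClosure _).isOpen_compl.preimage (by continuity)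
    have h1 : (1:H) ∈ {w : H | z * w ∉ (Subgroup.closure {y}).topologicalClosure} := by
      simpa using hz
    obtain ⟨N, hN⟩ := aux_exists_onsub hU h1
    have htop := h N
    have hzmem : z ∈ ((Subgroup.closure {y} ⊔ N.toSubgroup : Subgroup H) : Set H) := by
      rw [htop]; trivial
    rw [Subgroup.mul_normal] at hzmem
    obtain ⟨a, ha, n, hn, heq⟩ := hzmem
    have han : z * n⁻¹ = a := by rw [← heq]; group
    have hmem : z * n⁻¹ ∉ (Subgroup.closure {y}).topologicalClosure :=
      hN (inv_mem (show n ∈ N from hn))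
    exact hmem (han ▸ (Subgroup.le_topologicalClosure _ ha))

lemma T_isClopen (N : OpenNormalSubgroup H) :
    IsClopen {y : H | Subgroup.closure {y} ⊔ N.toSubgroup = ⊤} := by
  have hset : {y : H | Subgroup.closure {y} ⊔ N.toSubgroup = ⊤}
      = (QuotientGroup.mk : H → H ⧸ N.toSubgroup) ⁻¹'
        {x : H ⧸ N.toSubgroup | zpowers x = ⊤} := by
    ext y
    exact gens_iff N.toSubgroup y
  rw [hset]
  exact preimage_isClopen N _

end TopPart

section Lifts

variable {H : Type*} [Group H] [TopologicalSpace H] [IsTopologicalGroup H]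
  [CompactSpace H] [T2Space H] [TotallyDisconnectedSpace H]

lemma order_dvd_of_le {N' N : Subgroup H} [N'.Normal] [N.Normal] (hle : N' ≤ N) (g : H) :
    orderOf (QuotientGroup.mk g : H ⧸ N) ∣ orderOf (QuotientGroup.mk g : H ⧸ N') := by
  apply orderOf_dvd_of_pow_eq_one
  have h1 : (QuotientGroup.mk (g ^ orderOf (QuotientGroup.mk g : H ⧸ N')) : H ⧸ N') = 1 := by
    rw [QuotientGroup.mk_pow]; exact pow_orderOf_eq_one _
  have h2 : g ^ orderOf (QuotientGroup.mk g : H ⧸ N') ∈ N' := (QuotientGroup.eq_one_iff _).mp h1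
  rw [← QuotientGroup.mk_pow]
  exact (QuotientGroup.eq_one_iff _).mpr (hle h2)

/-- lifting a generator of `H ⧸ N'` to a generator of `H ⧸ N''`, within its `N'`-coset,
assuming `H ⧸ N''` is cyclic. -/
lemma finite_lift (N' N'' : OpenNormalSubgroup H) (hle : N''.toSubgroup ≤ N'.toSubgroup)
    {g : H} (hgen : zpowers (QuotientGroup.mk g : H ⧸ N''.toSubgroup) = ⊤)
    {y₀ : H} (hy : zpowers (QuotientGroup.mk y₀ : H ⧸ N'.toSubgroup) = ⊤) :
    ∃ z : H, (QuotientGroup.mk z : H ⧸ N'.toSubgroup) = QuotientGroup.mk y₀ ∧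
      zpowers (QuotientGroup.mk z : H ⧸ N''.toSubgroup) = ⊤ := by
  haveI : Finite (H ⧸ N''.toSubgroup) := N''.toSubgroup.quotient_finite_of_isOpen N''.isOpen
  haveI : Finite (H ⧸ N'.toSubgroup) := N'.toSubgroup.quotient_finite_of_isOpen N'.isOpen
  set c : H ⧸ N''.toSubgroup := QuotientGroup.mk g with hc
  set d : H ⧸ N'.toSubgroup := QuotientGroup.mk g with hd
  set m : ℕ := orderOf c with hm
  set n : ℕ := orderOf d with hn
  have hdgen : zpowers d = ⊤ := by
    rw [← gens_iff] at hgen ⊢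
    rw [eq_top_iff, ← hgen]
    exact sup_le_sup_left hle _
  -- y₀ is a natural power of d
  have hy₀ : QuotientGroup.mk y₀ ∈ Submonoid.powers d := by
    rw [mem_powers_iff_mem_zpowers, hdgen]; trivial
  obtain ⟨a, ha'⟩ := hy₀
  have ha : d ^ a = QuotientGroup.mk y₀ := ha'
  have hnpos : 0 < n := orderOf_pos d
  have hmpos : 0 < m := orderOf_pos c
  have hnm : n ∣ m := order_dvd_of_le hle g
  -- a is coprime to n
  have hda : orderOf (d ^ a) = n := by
    rw [ha]
    rw [hn]
    have h1 : orderOf (QuotientGroup.mk y₀ : H ⧸ N'.toSubgroup) = Nat.card (H ⧸ N'.toSubgroup) :=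
      orderOf_eq_card_of_forall_mem_zpowers (by intro x; rw [hy]; trivial)
    have h2 : orderOf d = Nat.card (H ⧸ N'.toSubgroup) :=
      orderOf_eq_card_of_forall_mem_zpowers (by intro x; rw [hdgen]; trivial)
    rw [h1, h2]
  have hda2 : n / n.gcd a = n := by
    conv_rhs => rw [← hda, orderOf_pow]
  have hgcd : n.gcd a = 1 := by
    have hdvd : n.gcd a ∣ n := Nat.gcd_dvd_left _ _
    have h3 := Nat.div_mul_cancel hdvd
    rw [hda2] at h3
    rcases Nat.lt_or_ge (n.gcd a) 2 with hlt | hge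
    · interval_cases h : (n.gcd a)
      · omega
      · rfl
    · have h4 : n * 2 ≤ n * n.gcd a := Nat.mul_le_mul_left n hge
      rw [h3] at h4; omega
  have hcop : a.Coprime n := Nat.coprime_comm.mp hgcd
  obtain ⟨b, hbm, hba⟩ := nt_lift hmpos hnm hcop
  refine ⟨g ^ b, ?_, ?_⟩
  · rw [QuotientGroup.mk_pow, ← hd, ← ha]
    rw [pow_eq_pow_iff_modEq, ← hn]
    exact hba
  · rw [QuotientGroup.mk_pow, ← hc]
    exact pow_gen hgen hbm

/-- compactness: a generator of `H ⧸ N'` lifts to a topological generator of `H`,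
within its `N'`-coset, provided `H` is procyclic. -/
lemma compact_lift {g : H} (hpro : (Subgroup.closure {g}).topologicalClosure = ⊤)
    (N' : OpenNormalSubgroup H) {y₀ : H}
    (hy : zpowers (QuotientGroup.mk y₀ : H ⧸ N'.toSubgroup) = ⊤) :
    ∃ y : H, (Subgroup.closure {y}).topologicalClosure = ⊤ ∧
      (QuotientGroup.mk y : H ⧸ N'.toSubgroup) = QuotientGroup.mk y₀ := by
  set F : OpenNormalSubgroup H → Set H := fun K =>
    {z | (QuotientGroup.mk z : H ⧸ N'.toSubgroup) = QuotientGroup.mk y₀ ∧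
         Subgroup.closure {z} ⊔ (K ⊓ N').toSubgroup = ⊤} with hF
  haveI : Nonempty (OpenNormalSubgroup H) := ⟨N'⟩
  have hFne : ∀ K, (F K).Nonempty := by
    intro K
    have hgK : zpowers (QuotientGroup.mk g : H ⧸ (K ⊓ N').toSubgroup) = ⊤ := by
      rw [← gens_iff]
      exact (mem_S_iff g).mp hpro (K ⊓ N')
    obtain ⟨z, hz1, hz2⟩ := finite_lift N' (K ⊓ N') inf_le_right hgK hy
    exact ⟨z, hz1, (gens_iff _ _).mpr hz2⟩
  have hFcl : ∀ K, IsClosed (F K) := by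
    intro K
    have : F K = {z : H | (QuotientGroup.mk z : H ⧸ N'.toSubgroup) = QuotientGroup.mk y₀} ∩
        {z : H | Subgroup.closure {z} ⊔ (K ⊓ N').toSubgroup = ⊤} := rfl
    rw [this]
    exact ((coset_clopen N' y₀).isClosed).inter (T_isClopen (K ⊓ N')).isClosed
  have hFdir : Directed (fun x1 x2 => x1 ⊇ x2) F := by
    have step : ∀ (K₁ K₂ : OpenNormalSubgroup H), K₁.toSubgroup ≤ K₂.toSubgroup →
        F K₁ ⊆ F K₂ := by
      intro K₁ K₂ hK z hz
      refine ⟨hz.1, ?_⟩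
      rw [eq_top_iff, ← hz.2]
      exact sup_le_sup_left (inf_le_inf_right _ hK) _
    intro K₁ K₂
    exact ⟨K₁ ⊓ K₂, step _ _ (fun x hx => hx.1), step _ _ (fun x hx => hx.2)⟩
  obtain ⟨y, hy⟩ := IsCompact.nonempty_iInter_of_directed_nonempty_isCompact_isClosed
    F hFdir hFne (fun K => (hFcl K).isCompact) hFcl
  simp only [Set.mem_iInter] at hy
  refine ⟨y, ?_, (hy N').1⟩
  rw [mem_S_iff]
  intro K
  rw [eq_top_iff, ← (hy K).2]
  exact sup_le_sup_left inf_le_left _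
end Lifts

section Big

variable {H : Type*} [Group H] [TopologicalSpace H] [IsTopologicalGroup H]
  [CompactSpace H] [T2Space H] [TotallyDisconnectedSpace H]

lemma exists_big (hinf : Infinite H) (N : OpenNormalSubgroup H) (k : ℕ) :
    ∃ N' : OpenNormalSubgroup H, N'.toSubgroup ≤ N.toSubgroup ∧
      k < (Nat.card (H ⧸ N'.toSubgroup)).totient := by
  by_contra hcon
  push_neg at hcon
  -- all indices of K ⊓ N are bounded
  have hfin : ∀ K : OpenNormalSubgroup H, Finite (H ⧸ (K ⊓ N).toSubgroup) := fun K =>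
    (K ⊓ N).toSubgroup.quotient_finite_of_isOpen (K ⊓ N).isOpen
  have hpos : ∀ K : OpenNormalSubgroup H, 0 < (K ⊓ N).toSubgroup.index := by
    intro K
    haveI := hfin K
    rw [Subgroup.index_eq_card]
    exact Nat.card_pos
  have hbdd : ∀ K : OpenNormalSubgroup H, (K ⊓ N).toSubgroup.index ≤ (2*k)^(2*k+1) := by
    intro K
    haveI := hfin K
    have h1 : (Nat.card (H ⧸ (K ⊓ N).toSubgroup)).totient ≤ k :=
      hcon (K ⊓ N) (fun x hx => hx.2)
    rw [Subgroup.index_eq_card]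
    exact nt_totient_bound Nat.card_pos h1
  -- take a maximal index
  set V : Set ℕ := Set.range (fun K : OpenNormalSubgroup H => (K ⊓ N).toSubgroup.index) with hV
  haveI : Nonempty (OpenNormalSubgroup H) := ⟨N⟩
  have hVne : V.Nonempty := Set.range_nonempty _
  have hVbdd : BddAbove V := ⟨(2*k)^(2*k+1), by rintro v ⟨K, rfl⟩; exact hbdd K⟩
  obtain ⟨K₀, hK₀'⟩ := Nat.sSup_mem hVne hVbdd
  have hK₀ : ((K₀ ⊓ N).toSubgroup).index = sSup V := hK₀'
  -- K₀ ⊓ N is contained in every open normal subgroup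
  have hmin : ∀ K : OpenNormalSubgroup H, (K₀ ⊓ N).toSubgroup ≤ K.toSubgroup := by
    intro K
    have hle : ((K ⊓ K₀) ⊓ N).toSubgroup ≤ (K₀ ⊓ N).toSubgroup := by
      intro x hx; exact ⟨hx.1.2, hx.2⟩
    have hdvd : (K₀ ⊓ N).toSubgroup.index ∣ ((K ⊓ K₀) ⊓ N).toSubgroup.index :=
      Subgroup.index_dvd_of_le hle
    have hle2 : ((K ⊓ K₀) ⊓ N).toSubgroup.index ≤ (K₀ ⊓ N).toSubgroup.index := by
      rw [hK₀]
      exact le_csSup hVbdd ⟨K ⊓ K₀, rfl⟩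
    have heq : ((K ⊓ K₀) ⊓ N).toSubgroup.index = (K₀ ⊓ N).toSubgroup.index :=
      Nat.le_antisymm hle2 (Nat.le_of_dvd (hpos _) hdvd)
    have hrel := Subgroup.relIndex_mul_index hle
    rw [heq] at hrel
    have hrel1 : ((K ⊓ K₀) ⊓ N).toSubgroup.relIndex (K₀ ⊓ N).toSubgroup = 1 := by
      have hp := hpos K₀
      rcases Nat.eq_zero_or_pos (((K ⊓ K₀) ⊓ N).toSubgroup.relIndex (K₀ ⊓ N).toSubgroup)
        with h0 | h1
      · rw [h0, zero_mul] at hrel; omega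
      · by_contra hne
        have h2 : 2 ≤ ((K ⊓ K₀) ⊓ N).toSubgroup.relIndex (K₀ ⊓ N).toSubgroup := by omega
        have := Nat.mul_le_mul_right ((K₀ ⊓ N).toSubgroup.index) h2
        omega
    have := Subgroup.relIndex_eq_one.mp hrel1
    exact le_trans (le_trans this (by intro x hx; exact hx.1.1)) (le_refl _)
  -- hence K₀ ⊓ N = ⊥, so H is discrete hence finite
  have hbot : (K₀ ⊓ N).toSubgroup = ⊥ := by
    rw [eq_bot_iff]
    intro x hx
    rw [Subgroup.mem_bot]
    by_contra hxne
    have hU : IsOpen ({x}ᶜ : Set H) := isClosed_singleton.isOpen_compl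
    have h1 : (1:H) ∈ ({x}ᶜ : Set H) := by simp [Ne.symm hxne]
    obtain ⟨K, hK⟩ := aux_exists_onsub hU h1
    exact hK (hmin K hx) rfl
  have hopen1 : IsOpen ({1} : Set H) := by
    have h2 : IsOpen (((K₀ ⊓ N).toSubgroup : Subgroup H) : Set H) := (K₀ ⊓ N).isOpen
    rw [hbot] at h2
    simpa using h2
  haveI : DiscreteTopology H := discreteTopology_iff_isOpen_singleton.mpr (by
    intro a
    have : ({a} : Set H) = (fun y : H => a⁻¹ * y) ⁻¹' {1} := by
      ext w; simp [eq_comm, inv_mul_eq_one]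
    rw [this]
    exact hopen1.preimage (by continuity))
  exact absurd finite_of_compact_of_discrete hinf.not_finite

end Big

section Perfect

variable {H : Type*} [Group H] [TopologicalSpace H] [IsTopologicalGroup H]
  [CompactSpace H] [T2Space H] [TotallyDisconnectedSpace H]

/-- near any topological generator there are two distinct topological generators in
any coset neighborhood. -/
lemma perfect_S (hinf : Infinite H) {g : H}
    (hg : (Subgroup.closure {g}).topologicalClosure = ⊤) (N : OpenNormalSubgroup H) :
    ∃ y z : H, (Subgroup.closure {y}).topologicalClosure = ⊤ ∧
      (Subgroup.closure {z}).topologicalClosure = ⊤ ∧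
      (QuotientGroup.mk y : H ⧸ N.toSubgroup) = QuotientGroup.mk g ∧
      (QuotientGroup.mk z : H ⧸ N.toSubgroup) = QuotientGroup.mk g ∧ y ≠ z := by
  haveI : Finite (H ⧸ N.toSubgroup) := N.toSubgroup.quotient_finite_of_isOpen N.isOpen
  set n : ℕ := orderOf (QuotientGroup.mk g : H ⧸ N.toSubgroup) with hn
  obtain ⟨N', hle, hbig⟩ := exists_big hinf N n.totient
  haveI : Finite (H ⧸ N'.toSubgroup) := N'.toSubgroup.quotient_finite_of_isOpen N'.isOpen
  have hgenN' : zpowers (QuotientGroup.mk g : H ⧸ N'.toSubgroup) = ⊤ :=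
    (gens_iff _ _).mp ((mem_S_iff g).mp hg N')
  have hgenN : zpowers (QuotientGroup.mk g : H ⧸ N.toSubgroup) = ⊤ :=
    (gens_iff _ _).mp ((mem_S_iff g).mp hg N)
  set m : ℕ := orderOf (QuotientGroup.mk g : H ⧸ N'.toSubgroup) with hm
  have hcardm : m = Nat.card (H ⧸ N'.toSubgroup) :=
    orderOf_eq_card_of_forall_mem_zpowers (by intro x; rw [hgenN']; trivial)
  have hmpos : 0 < m := orderOf_pos _
  have hnm : n ∣ m := order_dvd_of_le hle g
  have hφ : n.totient < m.totient := by rw [hcardm]; exact hbig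
  obtain ⟨b, c, hbm, hcm, hb1, hc1, hbc⟩ :=
    nt_lift2 hmpos hnm hφ (Nat.coprime_one_left n)
  -- lift g^b and g^c
  have hgb : zpowers (QuotientGroup.mk (g ^ b) : H ⧸ N'.toSubgroup) = ⊤ := by
    rw [QuotientGroup.mk_pow]; exact pow_gen hgenN' hbm
  have hgc : zpowers (QuotientGroup.mk (g ^ c) : H ⧸ N'.toSubgroup) = ⊤ := by
    rw [QuotientGroup.mk_pow]; exact pow_gen hgenN' hcm
  obtain ⟨y, hyS, hyq⟩ := compact_lift hg N' hgb
  obtain ⟨z, hzS, hzq⟩ := compact_lift hg N' hgc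
  have proj : ∀ w : H, (QuotientGroup.mk w : H ⧸ N'.toSubgroup) = QuotientGroup.mk g →
      True := fun _ _ => trivial
  have coset : ∀ {u v : H}, (QuotientGroup.mk u : H ⧸ N'.toSubgroup) = QuotientGroup.mk v →
      (QuotientGroup.mk u : H ⧸ N.toSubgroup) = QuotientGroup.mk v := by
    intro u v huv
    exact QuotientGroup.eq.mpr (hle (QuotientGroup.eq.mp huv))
  refine ⟨y, z, hyS, hzS, ?_, ?_, ?_⟩
  · rw [coset hyq, QuotientGroup.mk_pow]
    have : (QuotientGroup.mk g : H ⧸ N.toSubgroup) ^ b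
        = (QuotientGroup.mk g : H ⧸ N.toSubgroup) ^ 1 := by
      rw [pow_eq_pow_iff_modEq, ← hn]; exact hb1
    rw [this, pow_one]
  · rw [coset hzq, QuotientGroup.mk_pow]
    have : (QuotientGroup.mk g : H ⧸ N.toSubgroup) ^ c
        = (QuotientGroup.mk g : H ⧸ N.toSubgroup) ^ 1 := by
      rw [pow_eq_pow_iff_modEq, ← hn]; exact hc1
    rw [this, pow_one]
  · intro hyz
    rw [hyz] at hyq
    rw [hyq] at hzq
    rw [QuotientGroup.mk_pow, QuotientGroup.mk_pow] at hzq
    rw [pow_eq_pow_iff_modEq, ← hm] at hzq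
    exact hbc hzq

end Perfect

section Cantor

universe uX
variable {X : Type uX} [TopologicalSpace X] [CompactSpace X] [T2Space X]
  [TotallyDisconnectedSpace X]

/-- a nonempty closed subset of a profinite space, all of whose points are
accumulation points of it, has at least continuum many points. -/
lemma continuum_le_of_perfect {P : Set X} (hP : IsClosed P) (hne : P.Nonempty)
    (hsplit : ∀ x ∈ P, ∀ U : Set X, IsOpen U → x ∈ U → ∃ y, y ∈ P ∧ y ∈ U ∧ y ≠ x) :
    Cardinal.continuum ≤ Cardinal.mk P := by
  haveI : TotallySeparatedSpace X := loc_compact_t2_tot_disc_iff_tot_sep.mp ‹_›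
  -- the type of nodes
  let Node := {C : Set X // IsClopen C ∧ (P ∩ C).Nonempty}
  have hsplitN : ∀ C : Node, ∃ f : Bool → Node,
      (∀ b, (f b).1 ⊆ C.1) ∧ Disjoint (f false).1 (f true).1 := by
    rintro ⟨C, hC, ⟨x, hxP, hxC⟩⟩
    obtain ⟨y, hyP, hyC, hyx⟩ := hsplit x hxP C hC.isOpen hxC
    obtain ⟨D, hD, hyD, hxD⟩ := exists_isClopen_of_totally_separated hyx
    refine ⟨fun b => if b then ⟨C ∩ D, hC.inter hD, ⟨y, hyP, hyC, hyD⟩⟩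
      else ⟨C ∩ Dᶜ, hC.inter hD.compl, ⟨x, hxP, hxC, hxD⟩⟩, ?_, ?_⟩
    · intro b
      cases b <;> exact Set.inter_subset_left
    · simp only [Bool.false_eq_true, if_false, if_true]
      exact Set.disjoint_of_subset Set.inter_subset_right Set.inter_subset_right
        (disjoint_compl_left)
  choose split hsub hdisj using hsplitN
  -- the tree of clopen sets
  let root : Node := ⟨Set.univ, isClopen_univ, by simpa using hne⟩
  let tree : List Bool → Node := fun w => w.rec root (fun b _ ih => split ih b)
  have tree_cons : ∀ (b : Bool) (w : List Bool), tree (b :: w) = split (tree w) b :=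
    fun _ _ => rfl
  -- prefixes
  let pre : (ℕ → Bool) → ℕ → List Bool := fun f => fun k => k.rec [] (fun j ih => f j :: ih)
  have pre_succ : ∀ f k, pre f (k+1) = f k :: pre f k := fun _ _ => rfl
  have pre_eq : ∀ (f f' : ℕ → Bool) (k : ℕ), (∀ j < k, f j = f' j) → pre f k = pre f' k := by
    intro f f' k
    induction k with
    | zero => intro; rfl
    | succ j ih =>
      intro hagree
      rw [pre_succ, pre_succ, hagree j (by omega), ih (fun i hi => hagree i (by omega))]
  -- the nested compact sets
  have hcompact : ∀ w : List Bool, IsCompact (P ∩ (tree w).1) ∧ IsClosed (P ∩ (tree w).1) := by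
    intro w
    have : IsClosed (P ∩ (tree w).1) := hP.inter (tree w).2.1.isClosed
    exact ⟨this.isCompact, this⟩
  have hanti : ∀ f : ℕ → Bool, ∀ k, P ∩ (tree (pre f (k+1))).1 ⊆ P ∩ (tree (pre f k)).1 := by
    intro f k
    rw [pre_succ, tree_cons]
    exact Set.inter_subset_inter_right _ (hsub (tree (pre f k)) (f k))
  have hKne : ∀ f : ℕ → Bool, (⋂ k, P ∩ (tree (pre f k)).1).Nonempty := by
    intro f
    apply IsCompact.nonempty_iInter_of_sequence_nonempty_isCompact_isClosed
      (fun k => P ∩ (tree (pre f k)).1) (hanti f)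
      (fun k => (tree (pre f k)).2.2)
      (hcompact (pre f 0)).1 (fun k => (hcompact (pre f k)).2)
  choose ι hι using hKne
  -- injectivity
  have hmem : ∀ (f : ℕ → Bool) (k : ℕ), ι f ∈ (tree (pre f k)).1 := by
    intro f k
    exact (Set.mem_iInter.mp (hι f) k).2
  have hinj : Function.Injective ι := by
    intro f f' hff
    by_contra hne'
    have hex : ∃ k, f k ≠ f' k := by
      by_contra hc; push_neg at hc; exact hne' (funext hc)
    classical
    set k := Nat.find hex with hkdef
    have hk : f k ≠ f' k := Nat.find_spec hex
    have hmin : ∀ j < k, f j = f' j := by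
      intro j hj
      have := Nat.find_min hex hj
      exact not_not.mp this
    have hpre : pre f k = pre f' k := pre_eq f f' k hmin
    have h1 : ι f ∈ (split (tree (pre f k)) (f k)).1 := by
      have := hmem f (k+1)
      rwa [pre_succ, tree_cons] at this
    have h2 : ι f' ∈ (split (tree (pre f k)) (f' k)).1 := by
      have := hmem f' (k+1)
      rwa [pre_succ, tree_cons, ← hpre] at this
    rw [← hff] at h2
    have hd := hdisj (tree (pre f k))
    cases hf : f k with
    | false =>
      have hf' : f' k = true := by
        cases hf'' : f' k
        · rw [hf, hf''] at hk; exact absurd rfl hk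
        · rfl
      rw [hf] at h1; rw [hf'] at h2
      exact hd.ne_of_mem h1 h2 rfl
    | true =>
      have hf' : f' k = false := by
        cases hf'' : f' k
        · rfl
        · rw [hf, hf''] at hk; exact absurd rfl hk
      rw [hf] at h1; rw [hf'] at h2
      exact hd.ne_of_mem h2 h1 rfl
  -- conclude
  have hιP : ∀ f, ι f ∈ P := fun f => (Set.mem_iInter.mp (hι f) 0).1
  have hinj2 : Function.Injective
      (fun f : ULift.{uX} (ℕ → Bool) => (⟨ι f.down, hιP f.down⟩ : P)) := by
    intro a b hab
    apply ULift.ext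
    exact hinj (congrArg Subtype.val hab)
  have hle := Cardinal.mk_le_of_injective hinj2
  rw [Cardinal.mk_uLift] at hle
  have : Cardinal.mk (ℕ → Bool) = Cardinal.continuum := by
    rw [Cardinal.mk_arrow, Cardinal.mk_bool, Cardinal.mk_nat]
    simp [Cardinal.two_power_aleph0]
  rw [this, Cardinal.lift_continuum] at hle
  exact hle

end Cantor

/-- A procyclic group with fewer than `2^ℵ₀` topological generators is finite. -/
theorem stmt6 {H : Type*} [Group H] [TopologicalSpace H] [IsTopologicalGroup H]
    [CompactSpace H] [T2Space H] [TotallyDisconnectedSpace H]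
    (hpro : ∃ h : H, (Subgroup.closure {h}).topologicalClosure = ⊤)
    (hcard : Cardinal.mk ↥{g : H | (Subgroup.closure {g}).topologicalClosure = ⊤}
      < Cardinal.continuum) :
    Finite H := by
  cases finite_or_infinite H with
  | inl h => exact h
  | inr hinf =>
    exfalso
    obtain ⟨g, hg⟩ := hpro
    set S : Set H := {g : H | (Subgroup.closure {g}).topologicalClosure = ⊤} with hS
    have hScl : IsClosed S := by
      have hSi : S = ⋂ N : OpenNormalSubgroup H,
          {y : H | Subgroup.closure {y} ⊔ N.toSubgroup = ⊤} := by
        ext y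
        simp only [hS, Set.mem_setOf_eq, Set.mem_iInter]
        exact mem_S_iff y
      rw [hSi]
      exact isClosed_iInter (fun N => (T_isClopen N).isClosed)
    have hSne : S.Nonempty := ⟨g, hg⟩
    have hsplit : ∀ x ∈ S, ∀ U : Set H, IsOpen U → x ∈ U →
        ∃ y, y ∈ S ∧ y ∈ U ∧ y ≠ x := by
      intro x hx U hU hxU
      have hU1 : IsOpen {w : H | x * w ∈ U} := hU.preimage (by continuity)
      have h11 : (1:H) ∈ {w : H | x * w ∈ U} := by simpa using hxU
      obtain ⟨N, hN⟩ := aux_exists_onsub hU1 h11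
      obtain ⟨y, z, hyS, hzS, hyq, hzq, hyz⟩ := perfect_S hinf hx N
      have hmemU : ∀ w : H,
          (QuotientGroup.mk w : H ⧸ N.toSubgroup) = QuotientGroup.mk x → w ∈ U := by
        intro w hw
        have h1 : x⁻¹ * w ∈ N.toSubgroup := QuotientGroup.eq.mp hw.symm
        have h2 := hN h1
        simpa using h2
      by_cases hxy : y = x
      · refine ⟨z, hzS, hmemU z hzq, ?_⟩
        rw [← hxy]
        exact fun h => hyz h.symm
      · exact ⟨y, hyS, hmemU y hyq, hxy⟩
    have hfin := continuum_le_of_perfect hScl hSne hsplit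
    exact absurd hcard (not_lt.2 hfin)
end

section
/- Let G be a profinite group that is the direct product of its Sylow pro-p subgroups H_p (e.g. G pronilpotent), and let w be a group word. If the set of w-values in G has cardinality less than 2^ℵ₀, then w(H_p) = 1 for all but finitely many primes p. -/
private lemma lift_apply_pi {H : Nat.Primes → Type*} [∀ p, Group (H p)] {r : ℕ}
    (f : Fin r → ((p : Nat.Primes) → H p)) (w : FreeGroup (Fin r)) (p : Nat.Primes) :
    (FreeGroup.lift f w) p = FreeGroup.lift (fun i => f i p) w := by
  have h : (Pi.evalMonoidHom H p).comp (FreeGroup.lift f)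
      = FreeGroup.lift (fun i => f i p) := by
    apply FreeGroup.ext_hom
    intro i
    simp [Pi.evalMonoidHom]
  exact DFunLike.congr_fun h w

private lemma lift_const_one {G : Type*} [Group G] {r : ℕ} (w : FreeGroup (Fin r)) :
    FreeGroup.lift (fun _ : Fin r => (1 : G)) w = 1 := by
  have h : FreeGroup.lift (fun _ : Fin r => (1 : G)) = 1 := by
    apply FreeGroup.ext_hom
    intro i
    simp
  rw [h]; rfl

/-- Let `G = ∏_p H_p` be the direct product, over all primes `p`, of profinite pro-`p`
groups `H_p`.  If the set of `w`-values of `G` has cardinality less than `2^ℵ₀`, then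
`w(H_p) = 1` (i.e. all `w`-values of `H_p` are trivial) for all but finitely many `p`. -/
theorem stmt9 (H : Nat.Primes → Type*) [∀ p, Group (H p)] [∀ p, TopologicalSpace (H p)]
    [∀ p, IsTopologicalGroup (H p)] [∀ p, CompactSpace (H p)] [∀ p, T2Space (H p)]
    [∀ p, TotallyDisconnectedSpace (H p)]
    (hpro : ∀ (p : Nat.Primes) (U : Subgroup (H p)) [U.Normal],
      IsOpen (U : Set (H p)) → IsPGroup (p : ℕ) (H p ⧸ U))
    (r : ℕ) (w : FreeGroup (Fin r))
    (hcard : Cardinal.mk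
      ↥{x : (p : Nat.Primes) → H p |
        ∃ f : Fin r → ((p : Nat.Primes) → H p), FreeGroup.lift f w = x}
      < Cardinal.continuum) :
    {p : Nat.Primes | ∃ f : Fin r → H p, FreeGroup.lift f w ≠ 1}.Finite := by
  classical
  by_contra hfin
  set S := {p : Nat.Primes | ∃ f : Fin r → H p, FreeGroup.lift f w ≠ 1} with hS
  have hinf : S.Infinite := hfin
  choose F hF using fun p : S => p.2
  set W := {x : (p : Nat.Primes) → H p |
      ∃ f : Fin r → ((p : Nat.Primes) → H p), FreeGroup.lift f w = x} with hW
  have key : ∀ T : Set S, ∃ x ∈ W, ∀ p : Nat.Primes,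
      x p = if h : p ∈ S then (if (⟨p, h⟩ : S) ∈ T then
        FreeGroup.lift (F ⟨p, h⟩) w else 1) else 1 := by
    intro T
    set g : Fin r → ((p : Nat.Primes) → H p) := fun i p =>
      if h : p ∈ S then (if (⟨p, h⟩ : S) ∈ T then F ⟨p, h⟩ i else 1) else 1 with hg
    refine ⟨FreeGroup.lift g w, ⟨g, rfl⟩, fun p => ?_⟩
    rw [lift_apply_pi]
    by_cases h : p ∈ S
    · simp only [h, dif_pos]
      by_cases hT : (⟨p, h⟩ : S) ∈ T
      · simp only [hT, if_pos]
        have he : (fun i => g i p) = F ⟨p, h⟩ := by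
          funext i; simp [hg, h, hT]
        rw [he]
      · simp only [hT, if_neg, not_false_iff]
        have he : (fun i => g i p) = fun _ => (1 : H p) := by
          funext i; simp [hg, h, hT]
        rw [he, lift_const_one]
    · simp only [h, dif_neg, not_false_iff]
      have he : (fun i => g i p) = fun _ => (1 : H p) := by
        funext i; simp [hg, h]
      rw [he, lift_const_one]
  choose Φ hΦW hΦ using key
  have hinj : Function.Injective (fun T : Set S => (⟨Φ T, hΦW T⟩ : W)) := by
    intro T T' hTT'
    have hx : Φ T = Φ T' := congrArg Subtype.val hTT'
    ext p
    constructor <;> intro hp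
    · by_contra hp'
      have h1 := hΦ T p.val
      have h2 := hΦ T' p.val
      rw [hx] at h1
      rw [h1] at h2
      simp only [p.2, dif_pos] at h2
      rw [if_pos (by simpa using hp), if_neg (by simpa using hp')] at h2
      exact hF p h2
    · by_contra hp'
      have h1 := hΦ T p.val
      have h2 := hΦ T' p.val
      rw [hx] at h1
      rw [h1] at h2
      simp only [p.2, dif_pos] at h2
      rw [if_neg (by simpa using hp'), if_pos (by simpa using hp)] at h2
      exact hF p h2.symm
  have h0 : Cardinal.continuum ≤ Cardinal.mk (Set S) := by
    rw [Cardinal.mk_set, ← Cardinal.two_power_aleph0]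
    exact Cardinal.power_le_power_left (by norm_num) (Cardinal.aleph0_le_mk_iff.mpr hinf.to_subtype)
  have hle := Cardinal.lift_mk_le'.mpr ⟨⟨_, hinj⟩⟩
  have h1 : Cardinal.continuum ≤ Cardinal.mk W := by
    calc Cardinal.continuum = Cardinal.lift Cardinal.continuum :=
          (Cardinal.lift_continuum).symm
      _ ≤ Cardinal.lift (Cardinal.mk (Set S)) := Cardinal.lift_le.mpr h0
      _ ≤ Cardinal.mk W := by simpa using hle
  exact absurd h1 (not_le.mpr hcard)
end

section
/- Every group of exponent dividing 3 is nilpotent of class at most 3. Consequently, if F is a free group and w = x³, then F/w(F) is nilpotent of class at most 3. -/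
section BurnsideThree
variable {G : Type} [Group G]
open scoped commutatorElement

private lemma cube_mul (h : ∀ g : G, g ^ 3 = 1) (g : G) : g * g * g = 1 := by
  have hg := h g; rwa [pow_succ, pow_succ, pow_one] at hg

private lemma sq_eq_inv (h : ∀ g : G, g ^ 3 = 1) (g : G) : g * g = g⁻¹ := by
  exact eq_inv_of_mul_eq_one_left (cube_mul h g)

private lemma keyK (h : ∀ g : G, g ^ 3 = 1) (x y : G) : y * x * y = x⁻¹ * y⁻¹ * x⁻¹ := by
  have A := cube_mul h (x * y)
  have B : (y * x * y) * (x * y * x) = 1 := by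
    have := congrArg (fun z => x⁻¹ * z * x) A
    simpa [mul_assoc] using this
  have := mul_eq_one_iff_eq_inv.mp B
  simpa [mul_inv_rev, mul_assoc] using this

private lemma keyE (h : ∀ g : G, g ^ 3 = 1) (x g : G) :
    x * (g⁻¹ * x * g) * (g * x * g⁻¹) = 1 := by
  have hgg : g * g = g⁻¹ := sq_eq_inv h g
  have A := cube_mul h (x * g⁻¹)
  calc x * (g⁻¹ * x * g) * (g * x * g⁻¹)
      = x * g⁻¹ * x * (g * g) * x * g⁻¹ := by group
    _ = x * g⁻¹ * x * g⁻¹ * x * g⁻¹ := by rw [hgg]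
    _ = 1 := by simpa [mul_assoc] using A

private lemma ccomm (h : ∀ g : G, g ^ 3 = 1) (x b : G) :
    x * (b⁻¹ * x * b) = (b⁻¹ * x * b) * x := by
  have k1 : x * b⁻¹ * x = b * x⁻¹ * b := by simpa using keyK h b⁻¹ x
  have k2 : x * b * x = b⁻¹ * x⁻¹ * b⁻¹ := keyK h b x
  have hbb : b * b = b⁻¹ := sq_eq_inv h b
  have hbb' : b⁻¹ * b⁻¹ = b := by
    have := sq_eq_inv h b⁻¹; simpa using this
  calc x * (b⁻¹ * x * b) = (x * b⁻¹ * x) * b := by group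
    _ = b * x⁻¹ * (b * b) := by rw [k1]; group
    _ = b * x⁻¹ * b⁻¹ := by rw [hbb]
    _ = (b⁻¹ * b⁻¹) * x⁻¹ * b⁻¹ := by rw [hbb']
    _ = b⁻¹ * (b⁻¹ * x⁻¹ * b⁻¹) := by group
    _ = b⁻¹ * (x * b * x) := by rw [k2]
    _ = (b⁻¹ * x * b) * x := by group

private lemma ccomm2 (h : ∀ g : G, g ^ 3 = 1) (x g k : G) :
    (g⁻¹ * x * g) * (k⁻¹ * x * k) = (k⁻¹ * x * k) * (g⁻¹ * x * g) := by
  have := congrArg (fun z => g⁻¹ * z * g) (ccomm h x (k * g⁻¹))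
  simpa [mul_assoc, mul_inv_rev] using this

set_option maxHeartbeats 4000000 in
lemma core (h : ∀ g : G, g ^ 3 = 1) (a b c d : G) : ⁅⁅⁅a, b⁆, c⁆, d⁆ = 1 := by
  set S : Set G := Set.range fun g : G => g⁻¹ * a * g with hS
  have hSS : ∀ x ∈ S, ∀ y ∈ S, x * y = y * x := by
    rintro x ⟨g, rfl⟩ y ⟨k, rfl⟩; exact ccomm2 h a g k
  haveI hAC : IsMulCommutative (Subgroup.closure S) := by
    have h1 : Subgroup.closure S ≤ Subgroup.centralizer S :=
      (Subgroup.closure_le _).mpr (fun x hx => Subgroup.mem_centralizer_iff.mpr (fun y hy => hSS y hy x hx))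
    have h2 : ∀ x ∈ Subgroup.closure S, ∀ y ∈ Subgroup.closure S, x * y = y * x := by
      intro x hx y hy
      have hx' := h1 hx
      have hle : Subgroup.closure S ≤ Subgroup.centralizer {x} := by
        apply (Subgroup.closure_le _).mpr
        intro s hs
        exact Subgroup.mem_centralizer_iff.mpr (by
          rintro t rfl
          exact (Subgroup.mem_centralizer_iff.mp hx' s hs).symm)
      exact Subgroup.mem_centralizer_iff.mp (hle hy) x rfl
    exact ⟨⟨fun x y => Subtype.ext (h2 x x.2 y y.2)⟩⟩
  have hmem : ∀ w : G, w⁻¹ * a * w ∈ Subgroup.closure S :=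
    fun w => Subgroup.subset_closure ⟨w, rfl⟩
  set f : G → ↥(Subgroup.closure S) := fun w => ⟨w⁻¹ * a * w, hmem w⟩ with hf
  have hcube : ∀ w : G, f w * f w * f w = 1 := by
    intro w
    apply Subtype.ext
    simpa [hf, mul_assoc] using cube_mul h (w⁻¹ * a * w)
  have hinv : ∀ w : G, (f w)⁻¹ = f w * f w := fun w =>
    inv_eq_of_mul_eq_one_right (by rw [← mul_assoc]; exact hcube w)
  have hblock : ∀ g k : G, f g * f (g * k) * f (g * k⁻¹) = 1 := by
    intro g k
    apply Subtype.ext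
    have h0 := keyE h (g⁻¹ * a * g) k
    show (g⁻¹ * a * g) * ((g * k)⁻¹ * a * (g * k)) * ((g * k⁻¹)⁻¹ * a * (g * k⁻¹)) = 1
    calc (g⁻¹ * a * g) * ((g * k)⁻¹ * a * (g * k)) * ((g * k⁻¹)⁻¹ * a * (g * k⁻¹))
        = (g⁻¹*a*g) * (k⁻¹*(g⁻¹*a*g)*k) * (k*(g⁻¹*a*g)*k⁻¹) := by group
      _ = 1 := h0
  have B0 : f (1:G) * f d * f d⁻¹ = 1 := by
    have hh := hblock (1:G) d
    rw [show (1:G) * d = d by group, show (1:G) * d⁻¹ = d⁻¹ by group] at hh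
    exact hh
  have B1 : f (1:G) * f c * f c⁻¹ = 1 := by
    have hh := hblock (1:G) c
    rw [show (1:G) * c = c by group, show (1:G) * c⁻¹ = c⁻¹ by group] at hh
    exact hh
  have B2 : f (1:G) * f b * f b⁻¹ = 1 := by
    have hh := hblock (1:G) b
    rw [show (1:G) * b = b by group, show (1:G) * b⁻¹ = b⁻¹ by group] at hh
    exact hh
  have B3 : f (1:G) * f (d * c) * f (c⁻¹ * d⁻¹) = 1 := by
    have hh := hblock (1:G) (d * c)
    rw [show (1:G) * (d * c) = (d * c) by group, show (1:G) * (d * c)⁻¹ = (c⁻¹ * d⁻¹) by group] at hh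
    exact hh
  have B4 : f (1:G) * f (d * b) * f (b⁻¹ * d⁻¹) = 1 := by
    have hh := hblock (1:G) (d * b)
    rw [show (1:G) * (d * b) = (d * b) by group, show (1:G) * (d * b)⁻¹ = (b⁻¹ * d⁻¹) by group] at hh
    exact hh
  have B5 : f (1:G) * f (c * b) * f (b⁻¹ * c⁻¹) = 1 := by
    have hh := hblock (1:G) (c * b)
    rw [show (1:G) * (c * b) = (c * b) by group, show (1:G) * (c * b)⁻¹ = (b⁻¹ * c⁻¹) by group] at hh
    exact hh
  have B6 : f (1:G) * f (d * c * b) * f (b⁻¹ * c⁻¹ * d⁻¹) = 1 := by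
    have hh := hblock (1:G) (d * c * b)
    rw [show (1:G) * (d * c * b) = (d * c * b) by group, show (1:G) * (d * c * b)⁻¹ = (b⁻¹ * c⁻¹ * d⁻¹) by group] at hh
    exact hh
  have B7 : f (1:G) * f (d * b⁻¹ * c⁻¹) * f (c * b * d⁻¹) = 1 := by
    have hh := hblock (1:G) (d * b⁻¹ * c⁻¹)
    rw [show (1:G) * (d * b⁻¹ * c⁻¹) = (d * b⁻¹ * c⁻¹) by group, show (1:G) * (d * b⁻¹ * c⁻¹)⁻¹ = (c * b * d⁻¹) by group] at hh
    exact hh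
  have B8 : f (1:G) * f (d * c⁻¹ * b⁻¹) * f (b * c * d⁻¹) = 1 := by
    have hh := hblock (1:G) (d * c⁻¹ * b⁻¹)
    rw [show (1:G) * (d * c⁻¹ * b⁻¹) = (d * c⁻¹ * b⁻¹) by group, show (1:G) * (d * c⁻¹ * b⁻¹)⁻¹ = (b * c * d⁻¹) by group] at hh
    exact hh
  have B9 : f (1:G) * f (c * d⁻¹ * b⁻¹) * f (b * d * c⁻¹) = 1 := by
    have hh := hblock (1:G) (c * d⁻¹ * b⁻¹)
    rw [show (1:G) * (c * d⁻¹ * b⁻¹) = (c * d⁻¹ * b⁻¹) by group, show (1:G) * (c * d⁻¹ * b⁻¹)⁻¹ = (b * d * c⁻¹) by group] at hh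
    exact hh
  have B10 : f d * f (d * c * b) * f (d * b⁻¹ * c⁻¹) = 1 := by
    have hh := hblock d (c * b)
    rw [show d * (c * b) = (d * c * b) by group, show d * (c * b)⁻¹ = (d * b⁻¹ * c⁻¹) by group] at hh
    exact hh
  have B11 : f d * f (d * c * b⁻¹) * f (d * b * c⁻¹) = 1 := by
    have hh := hblock d (c * b⁻¹)
    rw [show d * (c * b⁻¹) = (d * c * b⁻¹) by group, show d * (c * b⁻¹)⁻¹ = (d * b * c⁻¹) by group] at hh
    exact hh
  have B12 : f d * f (d * b * c) * f (d * c⁻¹ * b⁻¹) = 1 := by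
    have hh := hblock d (b * c)
    rw [show d * (b * c) = (d * b * c) by group, show d * (b * c)⁻¹ = (d * c⁻¹ * b⁻¹) by group] at hh
    exact hh
  have B13 : f c * f (c * b * d) * f (c * d⁻¹ * b⁻¹) = 1 := by
    have hh := hblock c (b * d)
    rw [show c * (b * d) = (c * b * d) by group, show c * (b * d)⁻¹ = (c * d⁻¹ * b⁻¹) by group] at hh
    exact hh
  have B14 : f b * f (b * d * c⁻¹) * f (b * c * d⁻¹) = 1 := by
    have hh := hblock b (d * c⁻¹)
    rw [show b * (d * c⁻¹) = (b * d * c⁻¹) by group, show b * (d * c⁻¹)⁻¹ = (b * c * d⁻¹) by group] at hh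
    exact hh
  have B15 : f (d * c) * f (d * c * b) * f (d * c * b⁻¹) = 1 := by
    have hh := hblock (d * c) b
    rw [show (d * c) * b = (d * c * b) by group, show (d * c) * b⁻¹ = (d * c * b⁻¹) by group] at hh
    exact hh
  have B16 : f (d * b) * f (d * b * c) * f (d * b * c⁻¹) = 1 := by
    have hh := hblock (d * b) c
    rw [show (d * b) * c = (d * b * c) by group, show (d * b) * c⁻¹ = (d * b * c⁻¹) by group] at hh
    exact hh
  have B17 : f (c * b) * f (c * b * d) * f (c * b * d⁻¹) = 1 := by
    have hh := hblock (c * b) d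
    rw [show (c * b) * d = (c * b * d) by group, show (c * b) * d⁻¹ = (c * b * d⁻¹) by group] at hh
    exact hh
  have main : f (1:G) * (f b⁻¹)⁻¹ * f (b⁻¹ * c⁻¹) * (f c⁻¹)⁻¹ * f (c⁻¹ * d⁻¹) * (f (b⁻¹ * c⁻¹ * d⁻¹))⁻¹ * f (b⁻¹ * d⁻¹) * (f d⁻¹)⁻¹ = 1 := by
    rw [hinv b⁻¹, hinv c⁻¹, hinv (b⁻¹ * c⁻¹ * d⁻¹), hinv d⁻¹]
    show f (1:G) * (f b⁻¹ * f b⁻¹) * f (b⁻¹ * c⁻¹) * (f c⁻¹ * f c⁻¹) * f (c⁻¹ * d⁻¹) * (f (b⁻¹ * c⁻¹ * d⁻¹) * f (b⁻¹ * c⁻¹ * d⁻¹)) * f (b⁻¹ * d⁻¹) * (f d⁻¹ * f d⁻¹) = 1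
    have key : f (1:G) * (f b⁻¹ * f b⁻¹) * f (b⁻¹ * c⁻¹) * (f c⁻¹ * f c⁻¹) * f (c⁻¹ * d⁻¹) * (f (b⁻¹ * c⁻¹ * d⁻¹) * f (b⁻¹ * c⁻¹ * d⁻¹)) * f (b⁻¹ * d⁻¹) * (f d⁻¹ * f d⁻¹) * ((f (c * d⁻¹ * b⁻¹) * f (c * d⁻¹ * b⁻¹) * f (c * d⁻¹ * b⁻¹)) * (f d * f d * f d) * (f d * f d * f d) * (f (b * d * c⁻¹) * f (b * d * c⁻¹) * f (b * d * c⁻¹)) * (f (c * b * d) * f (c * b * d) * f (c * b * d)) * (f (c * b * d⁻¹) * f (c * b * d⁻¹) * f (c * b * d⁻¹)) * (f (b * c * d⁻¹) * f (b * c * d⁻¹) * f (b * c * d⁻¹)) * (f (d * c * b) * f (d * c * b) * f (d * c * b)) * (f (d * c * b) * f (d * c * b) * f (d * c * b)) * (f (d * b * c) * f (d * b * c) * f (d * b * c)) * (f (d * c) * f (d * c) * f (d * c)) * (f (d * b) * f (d * b) * f (d * b)) * (f (d * c * b⁻¹) * f (d * c * b⁻¹) * f (d * c * b⁻¹)) *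 (f (c * b) * f (c * b) * f (c * b)) * (f c * f c * f c) * (f b * f b * f b) * (f (d * b * c⁻¹) * f (d * b * c⁻¹) * f (d * b * c⁻¹)) * (f (1:G) * f (1:G) * f (1:G)) * (f (1:G) * f (1:G) * f (1:G)) * (f (1:G) * f (1:G) * f (1:G)) * (f (1:G) * f (1:G) * f (1:G)) * (f (1:G) * f (1:G) * f (1:G)) * (f (d * b⁻¹ * c⁻¹) * f (d * b⁻¹ * c⁻¹) * f (d * b⁻¹ * c⁻¹)) * (f (d * c⁻¹ * b⁻¹) * f (d * c⁻¹ * b⁻¹) * f (d * c⁻¹ * b⁻¹))) = (f (1:G) * f d * f d⁻¹) * (f (1:G) * f d * f d⁻¹) * (f (1:G) * f c * f c⁻¹) * (f (1:G) * f c * f c⁻¹) * (f (1:G) * f b * f b⁻¹) * (f (1:G) * f b * f b⁻¹) * (f (1:G) * f (d * c) * f (c⁻¹ * d⁻¹)) * (f (1:G) * f (d * b) * f (b⁻¹ * d⁻¹)) * (f (1:G) * f (c * b) * f (b⁻¹ * c⁻¹)) * (f (1:G) * f (d * c * b) * f (b⁻¹ * c⁻¹ * d⁻¹)) * (f (1:G)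 * f (d * c * b) * f (b⁻¹ * c⁻¹ * d⁻¹)) * (f (1:G) * f (d * b⁻¹ * c⁻¹) * f (c * b * d⁻¹)) * (f (1:G) * f (d * c⁻¹ * b⁻¹) * f (b * c * d⁻¹)) * (f (1:G) * f (d * c⁻¹ * b⁻¹) * f (b * c * d⁻¹)) * (f (1:G) * f (c * d⁻¹ * b⁻¹) * f (b * d * c⁻¹)) * (f (1:G) * f (c * d⁻¹ * b⁻¹) * f (b * d * c⁻¹)) * (f d * f (d * c * b) * f (d * b⁻¹ * c⁻¹)) * (f d * f (d * c * b) * f (d * b⁻¹ * c⁻¹)) * (f d * f (d * c * b⁻¹) * f (d * b * c⁻¹)) * (f d * f (d * b * c) * f (d * c⁻¹ * b⁻¹)) * (f c * f (c * b * d) * f (c * d⁻¹ * b⁻¹)) * (f b * f (b * d * c⁻¹) * f (b * c * d⁻¹)) * (f (d * c) * f (d * c * b) * f (d * c * b⁻¹)) * (f (d * c) * f (d * c * b) * f (d * c * b⁻¹)) * (f (d * b) * f (d * b * c) * f (d * b * c⁻¹)) * (f (d * b) * f (d * b * c) * f (d * b * c⁻¹)) * (f (c * b) * f (c * b * d) *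 f (c * b * d⁻¹)) * (f (c * b) * f (c * b * d) * f (c * b * d⁻¹)) := by ac_rfl
    have hCL : ((f (c * d⁻¹ * b⁻¹) * f (c * d⁻¹ * b⁻¹) * f (c * d⁻¹ * b⁻¹)) * (f d * f d * f d) * (f d * f d * f d) * (f (b * d * c⁻¹) * f (b * d * c⁻¹) * f (b * d * c⁻¹)) * (f (c * b * d) * f (c * b * d) * f (c * b * d)) * (f (c * b * d⁻¹) * f (c * b * d⁻¹) * f (c * b * d⁻¹)) * (f (b * c * d⁻¹) * f (b * c * d⁻¹) * f (b * c * d⁻¹)) * (f (d * c * b) * f (d * c * b) * f (d * c * b)) * (f (d * c * b) * f (d * c * b) * f (d * c * b)) * (f (d * b * c) * f (d * b * c) * f (d * b * c)) * (f (d * c) * f (d * c) * f (d * c)) * (f (d * b) * f (d * b) * f (d * b)) * (f (d * c * b⁻¹) * f (d * c * b⁻¹) * f (d * c * b⁻¹)) * (f (c * b) * f (c * b) * f (c * b)) * (f c * f c * f c) * (f b * f b * f b) * (f (d * b * c⁻¹) * f (d * b * c⁻¹) * f (d * b * c⁻¹)) * (f (1:G) * f (1:G) * f (1:G)) * (f (1:G)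 * f (1:G) * f (1:G)) * (f (1:G) * f (1:G) * f (1:G)) * (f (1:G) * f (1:G) * f (1:G)) * (f (1:G) * f (1:G) * f (1:G)) * (f (d * b⁻¹ * c⁻¹) * f (d * b⁻¹ * c⁻¹) * f (d * b⁻¹ * c⁻¹)) * (f (d * c⁻¹ * b⁻¹) * f (d * c⁻¹ * b⁻¹) * f (d * c⁻¹ * b⁻¹))) = (1 : ↥(Subgroup.closure S)) := by
      simp only [hcube, one_mul, mul_one]
    have hRHS : (f (1:G) * f d * f d⁻¹) * (f (1:G) * f d * f d⁻¹) * (f (1:G) * f c * f c⁻¹) * (f (1:G) * f c * f c⁻¹) * (f (1:G) * f b * f b⁻¹) * (f (1:G) * f b * f b⁻¹) * (f (1:G) * f (d * c) * f (c⁻¹ * d⁻¹)) * (f (1:G) * f (d * b) * f (b⁻¹ * d⁻¹)) * (f (1:G) * f (c * b) * f (b⁻¹ * c⁻¹)) * (f (1:G) * f (d * c * b) * f (b⁻¹ * c⁻¹ * d⁻¹)) * (f (1:G) * f (d * c * b) * f (b⁻¹ * c⁻¹ * d⁻¹)) * (f (1:G) * f (d * b⁻¹ * c⁻¹) * f (c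 * b * d⁻¹)) * (f (1:G) * f (d * c⁻¹ * b⁻¹) * f (b * c * d⁻¹)) * (f (1:G) * f (d * c⁻¹ * b⁻¹) * f (b * c * d⁻¹)) * (f (1:G) * f (c * d⁻¹ * b⁻¹) * f (b * d * c⁻¹)) * (f (1:G) * f (c * d⁻¹ * b⁻¹) * f (b * d * c⁻¹)) * (f d * f (d * c * b) * f (d * b⁻¹ * c⁻¹)) * (f d * f (d * c * b) * f (d * b⁻¹ * c⁻¹)) * (f d * f (d * c * b⁻¹) * f (d * b * c⁻¹)) * (f d * f (d * b * c) * f (d * c⁻¹ * b⁻¹)) * (f c * f (c * b * d) * f (c * d⁻¹ * b⁻¹)) * (f b * f (b * d * c⁻¹) * f (b * c * d⁻¹)) * (f (d * c) * f (d * c * b) * f (d * c * b⁻¹)) * (f (d * c) * f (d * c * b) * f (d * c * b⁻¹)) * (f (d * b) * f (d * b * c) * f (d * b * c⁻¹)) * (f (d * b) * f (d * b * c) * f (d * b * c⁻¹)) * (f (c * b) * f (c * b * d) * f (c * b * d⁻¹)) * (f (c * b) * f (c * b * d) * f (c * b * d⁻¹)) = (1 : ↥(Subgroup.closure S)) :=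 by
      simp only [B0, B1, B2, B3, B4, B5, B6, B7, B8, B9, B10, B11, B12, B13, B14, B15, B16, B17, hcube, one_mul, mul_one]
    calc f (1:G) * (f b⁻¹ * f b⁻¹) * f (b⁻¹ * c⁻¹) * (f c⁻¹ * f c⁻¹) * f (c⁻¹ * d⁻¹) * (f (b⁻¹ * c⁻¹ * d⁻¹) * f (b⁻¹ * c⁻¹ * d⁻¹)) * f (b⁻¹ * d⁻¹) * (f d⁻¹ * f d⁻¹) = f (1:G) * (f b⁻¹ * f b⁻¹) * f (b⁻¹ * c⁻¹) * (f c⁻¹ * f c⁻¹) * f (c⁻¹ * d⁻¹) * (f (b⁻¹ * c⁻¹ * d⁻¹) * f (b⁻¹ * c⁻¹ * d⁻¹)) * f (b⁻¹ * d⁻¹) * (f d⁻¹ * f d⁻¹) * ((f (c * d⁻¹ * b⁻¹) * f (c * d⁻¹ * b⁻¹) * f (c * d⁻¹ * b⁻¹)) * (f d * f d * f d) * (f d * f d * f d) * (f (b * d * c⁻¹) * f (b * d * c⁻¹) * f (b * d * c⁻¹)) * (f (c * b * d) * f (c * b * d) * f (c * b * d)) * (f (c * b * d⁻¹) * f (c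 * b * d⁻¹) * f (c * b * d⁻¹)) * (f (b * c * d⁻¹) * f (b * c * d⁻¹) * f (b * c * d⁻¹)) * (f (d * c * b) * f (d * c * b) * f (d * c * b)) * (f (d * c * b) * f (d * c * b) * f (d * c * b)) * (f (d * b * c) * f (d * b * c) * f (d * b * c)) * (f (d * c) * f (d * c) * f (d * c)) * (f (d * b) * f (d * b) * f (d * b)) * (f (d * c * b⁻¹) * f (d * c * b⁻¹) * f (d * c * b⁻¹)) * (f (c * b) * f (c * b) * f (c * b)) * (f c * f c * f c) * (f b * f b * f b) * (f (d * b * c⁻¹) * f (d * b * c⁻¹) * f (d * b * c⁻¹)) * (f (1:G) * f (1:G) * f (1:G)) * (f (1:G) * f (1:G) * f (1:G)) * (f (1:G) * f (1:G) * f (1:G)) * (f (1:G) * f (1:G) * f (1:G)) * (f (1:G) * f (1:G) * f (1:G)) * (f (d * b⁻¹ * c⁻¹) * f (d * b⁻¹ * c⁻¹) * f (d * b⁻¹ * c⁻¹)) * (f (d * c⁻¹ * b⁻¹) * f (d * c⁻¹ * b⁻¹) * f (d * c⁻¹ * b⁻¹))) := by rw [hCL, mul_one]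
      _ = _ := key
      _ = 1 := hRHS
  have hval : ((1:G)⁻¹ * a * (1:G)) * (b⁻¹⁻¹ * a * b⁻¹)⁻¹ * ((b⁻¹ * c⁻¹)⁻¹ * a * (b⁻¹ * c⁻¹)) * (c⁻¹⁻¹ * a * c⁻¹)⁻¹ * ((c⁻¹ * d⁻¹)⁻¹ * a * (c⁻¹ * d⁻¹)) * ((b⁻¹ * c⁻¹ * d⁻¹)⁻¹ * a * (b⁻¹ * c⁻¹ * d⁻¹))⁻¹ * ((b⁻¹ * d⁻¹)⁻¹ * a * (b⁻¹ * d⁻¹)) * (d⁻¹⁻¹ * a * d⁻¹)⁻¹ = (1:G) := by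
    have h2 := Subtype.ext_iff.mp main
    simpa only [hf, Subgroup.coe_mul, InvMemClass.coe_inv, OneMemClass.coe_one] using h2
  calc ⁅⁅⁅a, b⁆, c⁆, d⁆ = ((1:G)⁻¹ * a * (1:G)) * (b⁻¹⁻¹ * a * b⁻¹)⁻¹ * ((b⁻¹ * c⁻¹)⁻¹ * a * (b⁻¹ * c⁻¹)) * (c⁻¹⁻¹ * a * c⁻¹)⁻¹ * ((c⁻¹ * d⁻¹)⁻¹ * a * (c⁻¹ * d⁻¹)) * ((b⁻¹ * c⁻¹ * d⁻¹)⁻¹ * a * (b⁻¹ * c⁻¹ * d⁻¹))⁻¹ * ((b⁻¹ * d⁻¹)⁻¹ * a * (b⁻¹ * d⁻¹)) * (d⁻¹⁻¹ * a * d⁻¹)⁻¹ := by simp only [commutatorElement_def]; group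
    _ = 1 := hval
private lemma exponent_three_class_three (h : ∀ g : G, g ^ 3 = 1) :
    (⊤ : Subgroup G).lowerCentralSeries 3 = ⊥ := by
  have hcen : (⊤ : Subgroup G).lowerCentralSeries 2 ≤ Subgroup.center G := by
    have h1 : (⊤ : Subgroup G).lowerCentralSeries 2 = ⁅(⊤ : Subgroup G).lowerCentralSeries 1, ⊤⁆ := Subgroup.lowerCentralSeries_succ ⊤ 1
    rw [h1]
    apply Subgroup.commutator_le.mpr
    intro u hu z _
    have hu' : u ∈ Subgroup.closure (commutatorSet G) := by
      rw [← commutator_eq_closure]; exact hu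
    have key : ∀ w : G, ∀ hw : w ∈ Subgroup.closure (commutatorSet G),
        ∀ z : G, ⁅w, z⁆ ∈ Subgroup.center G := by
      intro w hw
      induction hw using Subgroup.closure_induction with
      | mem x hx =>
        obtain ⟨g₁, g₂, rfl⟩ := hx
        intro z
        rw [Subgroup.mem_center_iff]
        intro w
        have h4 := core h g₁ g₂ z w
        exact ((commutatorElement_eq_one_iff_commute.mp h4).symm).eq
      | one =>
        intro z
        have e : ⁅(1:G), z⁆ = 1 := by simp only [commutatorElement_def]; group
        rw [e]; exact Subgroup.one_mem _
      | mul x y hx hy ihx ihy =>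
        intro z
        have e1 : ⁅x * y, z⁆ = x * ⁅y, z⁆ * x⁻¹ * ⁅x, z⁆ := by
          simp only [commutatorElement_def]; group
        rw [Subgroup.mem_center_iff.mp (ihy z) x, mul_inv_cancel_right] at e1
        rw [e1]
        exact mul_mem (ihy z) (ihx z)
      | inv x hx ihx =>
        intro z
        have e1 : ⁅x⁻¹, z⁆ = x⁻¹ * ⁅x, z⁆⁻¹ * x := by
          simp only [commutatorElement_def]; group
        rw [Subgroup.mem_center_iff.mp (inv_mem (ihx z)) x⁻¹, inv_mul_cancel_right] at e1
        rw [e1]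
        exact inv_mem (ihx z)
    exact key u hu' z
  exact Subgroup.lowerCentralSeries_succ_eq_bot ⊤ hcen

end BurnsideThree

/-- Every group of exponent dividing 3 is nilpotent of class at most 3 (`γ₄ = 1`);
consequently, for a free group `F` and `w = x³`, the quotient `F/w(F)` is nilpotent
of class at most 3. -/
theorem stmt12 :
    (∀ (G : Type) [Group G], (∀ g : G, g ^ 3 = 1) → (⊤ : Subgroup G).lowerCentralSeries 3 = ⊥) ∧
    (∀ (α : Type), (⊤ : Subgroup
      (FreeGroup α ⧸ Subgroup.normalClosure {x : FreeGroup α | ∃ g : FreeGroup α, g ^ 3 = x})).lowerCentralSeries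
      3 = ⊥) := by
  constructor
  · intro G _ h
    exact exponent_three_class_three h
  · intro α
    apply exponent_three_class_three
    intro g
    obtain ⟨x, rfl⟩ := QuotientGroup.mk_surjective g
    rw [← QuotientGroup.mk_pow]
    rw [QuotientGroup.eq_one_iff]
    exact Subgroup.subset_normalClosure ⟨x, rfl⟩
end

section
/- Every 2-Engel group, i.e. every group satisfying [x, y, y] = 1 for all x, y, is nilpotent of class at most 3. -/
open scoped commutatorElement

namespace Engel2
variable {G : Type*} [Group G]

lemma cg1 (a b c : G) : ⁅a, b*c⁆ = ⁅a,b⁆ * (b*⁅a,c⁆*b⁻¹) := by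
  simp only [commutatorElement_def]; group
lemma cg2 (a b c : G) : ⁅a*b, c⁆ = (a*⁅b,c⁆*a⁻¹) * ⁅a,c⁆ := by
  simp only [commutatorElement_def]; group
lemma cg4 (g a c : G) : ⁅g*a*g⁻¹, c⁆ = g*⁅a, g⁻¹*c*g⁆*g⁻¹ := by
  simp only [commutatorElement_def]; group
lemma cg6 (a c : G) : ⁅a,c⁆ = a * (c*a⁻¹*c⁻¹) := by
  simp only [commutatorElement_def]; group
lemma cg9 (u z : G) : z*u*z⁻¹ = ⁅z,u⁆ * u := by
  simp only [commutatorElement_def]; group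
lemma cg7 {a c : G} (hc : Commute a ⁅a,c⁆) : ⁅a⁻¹,c⁆ = ⁅a,c⁆⁻¹ := by
  have e : ⁅a⁻¹,c⁆ = a⁻¹ * ⁅a,c⁆⁻¹ * a := by simp only [commutatorElement_def]; group
  rw [e, mul_assoc, ← hc.inv_right.eq]; group

lemma conjCommute {a b : G} (hab : Commute a b) (g : G) :
    Commute (g*a*g⁻¹) (g*b*g⁻¹) := by
  simpa [MulAut.conj_apply, mul_assoc] using hab.map (MulAut.conj g)

/-- `c` centralizes the normal closure of `a`. -/
def CCl (c a : G) : Prop := ∀ g : G, Commute c (g*a*g⁻¹)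

lemma CCl.conj {c a : G} (H : CCl c a) (g : G) : CCl (g*c*g⁻¹) a := by
  intro k
  have h2 := conjCommute (H (g⁻¹*k)) g
  have e : g*((g⁻¹*k)*a*(g⁻¹*k)⁻¹)*g⁻¹ = k*a*k⁻¹ := by group
  rwa [e] at h2

lemma CCl.bracket_right {c a : G} (H : CCl c a) (u : G) : CCl c ⁅a,u⁆ := by
  intro g
  have e : g*⁅a,u⁆*g⁻¹ = (g*a*g⁻¹) * ((g*u)*a*(g*u)⁻¹)⁻¹ := by
    simp only [commutatorElement_def]; group
  rw [e]; exact (H g).mul_right (H (g*u)).inv_right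

lemma CCl.bracket_left {c a : G} (H : CCl c a) (u : G) : CCl c ⁅u,a⁆ := by
  intro g
  have e : g*⁅u,a⁆*g⁻¹ = (g*⁅a,u⁆*g⁻¹)⁻¹ := by
    simp only [commutatorElement_def]; group
  rw [e]; exact (H.bracket_right u g).inv_right

/-- if `C` centralizes closure of `a` then so does `⁅C,u⁆`. -/
lemma CCl.host_bracket {C a : G} (H : CCl C a) (u : G) : CCl ⁅C,u⁆ a := by
  intro g
  rw [cg6 C u]
  refine (H g).mul_left ?_
  have h2 := (H.conj u) g
  have e : (u*C*u⁻¹)⁻¹ = u*C⁻¹*u⁻¹ := by group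
  simpa [e] using h2.inv_left

lemma CCl.host_bracket' {C a : G} (H : CCl C a) (u : G) : CCl ⁅u,C⁆ a := by
  intro g
  have : (⁅C,u⁆)⁻¹ = ⁅u,C⁆ := commutatorElement_inv C u
  rw [← this]; exact (H.host_bracket u g).inv_left

lemma CCl.comm {c a : G} (H : CCl c a) : Commute c a := by simpa using H 1

section withH

lemma comm_y (h : ∀ x y : G, ⁅⁅x, y⁆, y⁆ = 1) (x y : G) : Commute ⁅x,y⁆ y :=
  commutatorElement_eq_one_iff_commute.mp (h x y)

lemma comm_x (h : ∀ x y : G, ⁅⁅x, y⁆, y⁆ = 1) (x y : G) : Commute ⁅x,y⁆ x := by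
  have := (comm_y h y x).inv_left
  rwa [commutatorElement_inv] at this

lemma ccl_x (h : ∀ x y : G, ⁅⁅x, y⁆, y⁆ = 1) (x y : G) : CCl ⁅x,y⁆ x := by
  intro g
  -- first: Commute (y'*⁅x,z⁆*y'⁻¹) x for all y', with bracket second arg z := y
  have main : ∀ y' z : G, Commute (y'*⁅x,z⁆*y'⁻¹) x := by
    intro y' z
    have h1 : Commute ⁅x, y'*z⁆ x := comm_x h x (y'*z)
    rw [cg1] at h1
    have h2 : Commute ⁅x,y'⁆ x := comm_x h x y'
    have h3 := h2.inv_left.mul_left h1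
    have e : ⁅x,y'⁆⁻¹ * (⁅x,y'⁆ * (y'*⁅x,z⁆*y'⁻¹)) = y'*⁅x,z⁆*y'⁻¹ := by group
    rwa [e] at h3
  have h4 := conjCommute (main g⁻¹ y) g
  have e1 : g*(g⁻¹*⁅x,y⁆*g⁻¹⁻¹)*g⁻¹ = ⁅x,y⁆ := by group
  rwa [e1] at h4

variable (h : ∀ x y : G, ⁅⁅x, y⁆, y⁆ = 1)
include h

lemma ccl_y (x y : G) : CCl ⁅x,y⁆ y := by
  intro g
  have := (ccl_x h y x) g
  rw [← commutatorElement_inv]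
  exact this.inv_left

lemma ccl_self (z : G) : CCl z z := by
  intro g
  rw [cg9 z g]
  exact ((comm_y h g z).symm.mul_right (Commute.refl z))

/-- antisymmetry of `f x y z := ⁅⁅x,y⁆,z⁆` in the last two slots -/
lemma alt23 (x y z : G) : ⁅⁅x,z⁆,y⁆ = ⁅⁅x,y⁆,z⁆⁻¹ := by
  have h1 : ⁅⁅x, y*z⁆, y*z⁆ = 1 := h x (y*z)
  rw [cg1 x y z, cg2] at h1
  -- ⁅y*⁅x,z⁆*y⁻¹, y*z⁆ = y * ⁅⁅x,z⁆, z*y⁆ * y⁻¹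
  have e2 : ⁅y*⁅x,z⁆*y⁻¹, y*z⁆ = y * ⁅⁅x,z⁆, z*y⁆ * y⁻¹ := by
    rw [cg4]
    congr 2
    group
  rw [e2, cg1 ⁅x,z⁆ z y, h x z, one_mul, cg1 ⁅x,y⁆ y z, h x y, one_mul] at h1
  -- h1 : ⁅x,y⁆ * (y * (z*⁅⁅x,z⁆,y⁆*z⁻¹) * y⁻¹) * ⁅x,y⁆⁻¹ * (y*⁅⁅x,y⁆,z⁆*y⁻¹) = 1
  -- drop the ⁅x,y⁆ conjugation
  have hA : Commute ⁅x,y⁆ ((y*z)*⁅⁅x,z⁆,y⁆*(y*z)⁻¹) :=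
    (((ccl_x h x y).bracket_right z).bracket_right y) (y*z)
  have e3 : y * (z*⁅⁅x,z⁆,y⁆*z⁻¹) * y⁻¹ = (y*z)*⁅⁅x,z⁆,y⁆*(y*z)⁻¹ := by group
  rw [e3] at h1
  rw [show ⁅x,y⁆ * ((y*z)*⁅⁅x,z⁆,y⁆*(y*z)⁻¹) * ⁅x,y⁆⁻¹ = (y*z)*⁅⁅x,z⁆,y⁆*(y*z)⁻¹
      from by rw [hA.eq]; group] at h1
  -- now h1 : (y*z)*⁅⁅x,z⁆,y⁆*(y*z)⁻¹ * (y*⁅⁅x,y⁆,z⁆*y⁻¹) = 1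
  have h5 : z*⁅⁅x,z⁆,y⁆*z⁻¹ * ⁅⁅x,y⁆,z⁆ = 1 := by
    have e4 : (y*z)*⁅⁅x,z⁆,y⁆*(y*z)⁻¹ * (y*⁅⁅x,y⁆,z⁆*y⁻¹)
        = y * (z*⁅⁅x,z⁆,y⁆*z⁻¹ * ⁅⁅x,y⁆,z⁆) * y⁻¹ := by group
    rw [e4] at h1
    have : z*⁅⁅x,z⁆,y⁆*z⁻¹ * ⁅⁅x,y⁆,z⁆ = y⁻¹ * 1 * y := by rw [← h1]; group
    simpa using this
  have hz : Commute z ⁅⁅x,z⁆,y⁆ :=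
    (((ccl_self h z).bracket_left x).bracket_right y).comm
  rw [show z*⁅⁅x,z⁆,y⁆*z⁻¹ = ⁅⁅x,z⁆,y⁆ from by rw [hz.eq]; group] at h5
  exact eq_inv_of_mul_eq_one_left h5

/-- antisymmetry in the first two slots -/
lemma alt12 (x y z : G) : ⁅⁅y,x⁆,z⁆ = ⁅⁅x,y⁆,z⁆⁻¹ := by
  have hc : Commute ⁅x,y⁆ ⁅⁅x,y⁆,z⁆ :=
    (((ccl_x h x y).bracket_right y).bracket_right z).comm
  rw [← commutatorElement_inv x y, cg7 hc]

/-- cyclic symmetry -/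
lemma cyc (x y z : G) : ⁅⁅z,x⁆,y⁆ = ⁅⁅x,y⁆,z⁆ := by
  rw [alt12 h x z y, alt23 h x y z, inv_inv]

lemma hw_reduce (a b c : G) : ⁅⁅a,b⁆, b*c*b⁻¹⁆ = ⁅⁅a,b⁆,c⁆ := by
  rw [cg9 c b, cg1]
  have h1 : ⁅⁅a,b⁆, ⁅b,c⁆⁆ = 1 :=
    commutatorElement_eq_one_iff_commute.mpr (((ccl_y h a b).bracket_right c).comm)
  have h2 : Commute ⁅b,c⁆ ⁅⁅a,b⁆,c⁆ :=
    (((ccl_x h b c).bracket_left a).bracket_right c).comm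
  rw [h1, one_mul, show ⁅b,c⁆*⁅⁅a,b⁆,c⁆*⁅b,c⁆⁻¹ = ⁅⁅a,b⁆,c⁆ from by rw [h2.eq]; group]

lemma cube (a b c : G) : ⁅⁅a,b⁆,c⁆^3 = 1 := by
  have hw : ⁅⁅a,b⁆, b*c*b⁻¹⁆ * ⁅⁅b,c⁆, c*a*c⁻¹⁆ * ⁅⁅c,a⁆, a*b*a⁻¹⁆ = 1 := by
    simp only [commutatorElement_def]; group
  rw [hw_reduce h a b c, hw_reduce h b c a, hw_reduce h c a b,
      cyc h c a b, cyc h a b c] at hw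
  rw [show ⁅⁅a,b⁆,c⁆^3 = ⁅⁅a,b⁆,c⁆*⁅⁅a,b⁆,c⁆*⁅⁅a,b⁆,c⁆ from by rw [pow_succ, pow_two]]
  exact hw

lemma ccl_CC (a b c : G) : CCl ⁅⁅a,b⁆,c⁆ ⁅⁅a,b⁆,c⁆ :=
  (ccl_x h ⁅a,b⁆ c).bracket_right c

lemma commF (a b c d : G) : Commute ⁅⁅a,b⁆,c⁆ ⁅⁅⁅a,b⁆,c⁆,d⁆ :=
  ((ccl_CC h a b c).bracket_right d).comm

lemma S1 (a b c d : G) : ⁅⁅⁅b,a⁆,c⁆,d⁆ = ⁅⁅⁅a,b⁆,c⁆,d⁆⁻¹ := by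
  rw [alt12 h a b c, cg7 (commF h a b c d)]

lemma S2 (a b c d : G) : ⁅⁅⁅a,c⁆,b⁆,d⁆ = ⁅⁅⁅a,b⁆,c⁆,d⁆⁻¹ := by
  rw [alt23 h a b c, cg7 (commF h a b c d)]

lemma S3 (x y z w : G) : ⁅⁅⁅x,y⁆,w⁆,z⁆ = ⁅⁅⁅w,x⁆,z⁆,y⁆ := by
  have E1 : ⁅⁅x,y⁆, z*w⁆ = ⁅⁅x,y⁆,z⁆ * (⁅⁅⁅x,y⁆,w⁆,z⁆⁻¹ * ⁅⁅x,y⁆,w⁆) := by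
    rw [cg1, cg9 ⁅⁅x,y⁆,w⁆ z, ← commutatorElement_inv ⁅⁅x,y⁆,w⁆ z]
  have c3 : Commute (z*⁅w,x⁆*z⁻¹) ⁅⁅z,x⁆,y⁆ :=
    ((((ccl_y h z x).host_bracket y).bracket_left w) z).symm
  have c5 : Commute ⁅z,⁅w,x⁆⁆ ⁅⁅w,x⁆,y⁆ :=
    (((ccl_x h ⁅w,x⁆ y).bracket_left z).comm).symm
  have c6 : Commute ⁅⁅w,x⁆,z⁆ ⁅⁅⁅w,x⁆,z⁆,y⁆ := commF h w x z y
  have E2 : ⁅⁅x,y⁆, z*w⁆ = ⁅⁅x,y⁆,z⁆ * (⁅⁅x,y⁆,w⁆ * ⁅⁅⁅w,x⁆,z⁆,y⁆⁻¹) := by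
    calc ⁅⁅x,y⁆, z*w⁆ = ⁅⁅z*w,x⁆,y⁆ := (cyc h x y (z*w)).symm
      _ = ⁅(z*⁅w,x⁆*z⁻¹) * ⁅z,x⁆, y⁆ := by rw [cg2 z w x]
      _ = ((z*⁅w,x⁆*z⁻¹) * ⁅⁅z,x⁆,y⁆ * (z*⁅w,x⁆*z⁻¹)⁻¹) * ⁅z*⁅w,x⁆*z⁻¹, y⁆ := by
          rw [cg2]
      _ = ⁅⁅z,x⁆,y⁆ * ⁅z*⁅w,x⁆*z⁻¹, y⁆ := by
          rw [show (z*⁅w,x⁆*z⁻¹) * ⁅⁅z,x⁆,y⁆ * (z*⁅w,x⁆*z⁻¹)⁻¹ = ⁅⁅z,x⁆,y⁆ from by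
            rw [c3.eq]; group]
      _ = ⁅⁅z,x⁆,y⁆ * ((⁅z,⁅w,x⁆⁆ * ⁅⁅w,x⁆,y⁆ * ⁅z,⁅w,x⁆⁆⁻¹) * ⁅⁅z,⁅w,x⁆⁆,y⁆) := by
          rw [cg9 ⁅w,x⁆ z, cg2]
      _ = ⁅⁅z,x⁆,y⁆ * (⁅⁅w,x⁆,y⁆ * ⁅⁅⁅w,x⁆,z⁆,y⁆⁻¹) := by
          rw [show ⁅z,⁅w,x⁆⁆ * ⁅⁅w,x⁆,y⁆ * ⁅z,⁅w,x⁆⁆⁻¹ = ⁅⁅w,x⁆,y⁆ from by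
              rw [c5.eq]; group,
            show ⁅⁅z,⁅w,x⁆⁆,y⁆ = ⁅⁅⁅w,x⁆,z⁆,y⁆⁻¹ from by
              rw [← commutatorElement_inv ⁅w,x⁆ z, cg7 c6]]
      _ = ⁅⁅x,y⁆,z⁆ * (⁅⁅x,y⁆,w⁆ * ⁅⁅⁅w,x⁆,z⁆,y⁆⁻¹) := by
          rw [cyc h x y z, cyc h x y w]
  have main := mul_left_cancel (E1.symm.trans E2)
  -- main : ⁅⁅⁅x,y⁆,w⁆,z⁆⁻¹ * ⁅⁅x,y⁆,w⁆ = ⁅⁅x,y⁆,w⁆ * ⁅⁅⁅w,x⁆,z⁆,y⁆⁻¹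
  have c7 : Commute ⁅⁅x,y⁆,w⁆ ⁅⁅⁅x,y⁆,w⁆,z⁆⁻¹ := (commF h x y w z).inv_right
  rw [← c7.eq] at main
  have := mul_left_cancel main
  exact inv_injective this

/-- relabeled S3 -/
lemma R (a b c d : G) : ⁅⁅⁅a,b⁆,c⁆,d⁆ = ⁅⁅⁅c,a⁆,d⁆,b⁆ := S3 h a b d c

omit h in
lemma cube_transfer {a u : G} (hc : Commute a ⁅a,u⁆) (h3 : a^3 = 1) : ⁅a,u⁆^3 = 1 := by
  have hb : Commute a (u*a⁻¹*u⁻¹) := by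
    have h1 := hc.eq
    rw [cg6 a u] at h1
    have h2 : a * (a * (u*a⁻¹*u⁻¹)) = a * ((u*a⁻¹*u⁻¹) * a) := by
      rw [show a * (a * (u*a⁻¹*u⁻¹)) = a * (a * (u*a⁻¹*u⁻¹)) * 1 from by group, h1]; group
    exact mul_left_cancel h2
  have e1 : (u*a⁻¹*u⁻¹)^3 = u*(a^3)⁻¹*u⁻¹ := by
    rw [pow_succ, pow_two, pow_succ, pow_two]; group
  rw [cg6 a u, hb.mul_pow, h3, e1, h3]
  simp

omit h in
lemma sq_cube_eq_one {F : G} (h2 : F = F⁻¹) (h3 : F^3 = 1) : F = 1 := by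
  have h4 : F * F = 1 := by nth_rewrite 2 [h2]; simp
  have h5 : F = F^3 * (F*F)⁻¹ := by rw [pow_succ, pow_two]; group
  rw [h5, h3, h4]; simp

lemma key (x y z w : G) : ⁅⁅⁅x,y⁆,z⁆,w⁆ = 1 := by
  -- square is one
  have sq : ⁅⁅⁅x,y⁆,z⁆,w⁆ = ⁅⁅⁅x,y⁆,z⁆,w⁆⁻¹ := by
    calc ⁅⁅⁅x,y⁆,z⁆,w⁆ = ⁅⁅⁅z,x⁆,w⁆,y⁆ := R h x y z w
      _ = ⁅⁅⁅w,z⁆,y⁆,x⁆ := R h z x w y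
      _ = ⁅⁅⁅z,w⁆,y⁆,x⁆⁻¹ := S1 h z w y x
      _ = ⁅⁅⁅y,z⁆,x⁆,w⁆⁻¹ := by rw [R h z w y x]
      _ = ⁅⁅⁅x,y⁆,z⁆,w⁆⁻¹ := by rw [cyc h z x y, cyc h x y z]
  exact sq_cube_eq_one sq ((cube_transfer (commF h x y z w) (cube h x y z)))
end withH
end Engel2


/-- Every 2-Engel group, i.e. every group satisfying `[x,y,y] = 1` for all `x, y`,
is nilpotent of class at most 3 (`γ₄ = 1`). -/
theorem stmt13 (G : Type*) [Group G] (h : ∀ x y : G, ⁅⁅x, y⁆, y⁆ = 1) :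
    (⊤ : Subgroup G).lowerCentralSeries 3 = ⊥ := by
  have key : ∀ x y z w : G, ⁅⁅⁅x,y⁆,z⁆,w⁆ = 1 := Engel2.key h
  have hLCS1 : (⊤ : Subgroup G).lowerCentralSeries 1 ≤ Subgroup.upperCentralSeries G 2 := by
    show ⁅(⊤ : Subgroup G), ⊤⁆ ≤ _
    rw [Subgroup.commutator_le]
    intro p _ q _
    rw [Subgroup.mem_upperCentralSeries_succ_iff]
    intro u
    rw [Subgroup.upperCentralSeries_one, Subgroup.mem_center_iff]
    intro w
    have e : ⁅p,q⁆*u*⁅p,q⁆⁻¹*u⁻¹ = ⁅⁅p,q⁆,u⁆ := (commutatorElement_def _ _).symm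
    exact (commutatorElement_eq_one_iff_commute.mp (key p q u w)).symm.eq
  have hcenter : (⊤ : Subgroup G).lowerCentralSeries 2 ≤ Subgroup.center G := by
    show ⁅(⊤ : Subgroup G).lowerCentralSeries 1, ⊤⁆ ≤ _
    rw [Subgroup.commutator_le]
    intro b hb g _
    have hb2 := Subgroup.mem_upperCentralSeries_succ_iff.mp (hLCS1 hb) g
    rw [Subgroup.upperCentralSeries_one] at hb2
    have e : b*g*b⁻¹*g⁻¹ = ⁅b,g⁆ := (commutatorElement_def _ _).symm
    exact hb2
  rw [eq_bot_iff]
  show ⁅(⊤ : Subgroup G).lowerCentralSeries 2, ⊤⁆ ≤ ⊥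
  rw [Subgroup.commutator_le]
  intro a ha g _
  rw [Subgroup.mem_bot]
  exact commutatorElement_eq_one_iff_commute.mpr
    (Subgroup.mem_center_iff.mp (hcenter ha) g).symm
end

section
/- Let G be a profinite group in which every element has finite order and such that, for a fixed positive integer m, the set of m-th powers {g^m : g ∈ G} has cardinality less than 2^ℵ₀. Let q be a prime not dividing m and let Q be a Sylow pro-q subgroup of G. Then Q is finite. -/
open Set

/-- In a nonempty compact Hausdorff totally disconnected space in which every nonempty
clopen set has at least two points, the cardinality is at least the continuum. -/
theorem cantor_aux {X : Type*} [TopologicalSpace X] [CompactSpace X] [T2Space X]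
    [TotallyDisconnectedSpace X] [Nonempty X]
    (hsplit : ∀ C : Set X, IsClopen C → C.Nonempty → ∃ x ∈ C, ∃ y ∈ C, x ≠ y) :
    Cardinal.continuum ≤ Cardinal.mk X := by
  have : TotallySeparatedSpace X := loc_compact_t2_tot_disc_iff_tot_sep.mp ‹_›
  -- separation by clopens
  have hsep : ∀ x y : X, x ≠ y → ∃ U : Set X, IsClopen U ∧ x ∈ U ∧ y ∉ U := by
    intro x y hxy
    obtain ⟨u, v, hu, hv, hxu, hyv, huniv, hdis⟩ :=
      this.isTotallySeparated_univ (mem_univ x) (mem_univ y) hxy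
    have hvc : v = uᶜ := by
      apply Subset.antisymm
      · intro z hz hzu; exact hdis.ne_of_mem hzu hz rfl
      · intro z hz; rcases huniv (mem_univ z) with h | h
        · exact absurd h hz
        · exact h
    refine ⟨u, ⟨?_, hu⟩, hxu, fun h => hdis.ne_of_mem h hyv rfl⟩
    rw [← isOpen_compl_iff, ← hvc]; exact hv
  -- splitting of a nonempty clopen set into two disjoint nonempty clopen pieces
  set S := {C : Set X // IsClopen C ∧ C.Nonempty} with hS
  have key : ∀ C : S, ∃ A B : S, A.1 ⊆ C.1 ∧ B.1 ⊆ C.1 ∧ Disjoint A.1 B.1 := by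
    rintro ⟨C, hC, hCne⟩
    obtain ⟨x, hx, y, hy, hxy⟩ := hsplit C hC hCne
    obtain ⟨U, hU, hxU, hyU⟩ := hsep x y hxy
    refine ⟨⟨C ∩ U, hC.inter hU, ⟨x, hx, hxU⟩⟩, ⟨C \ U, hC.diff hU, ⟨y, hy, hyU⟩⟩,
      inter_subset_left, diff_subset, ?_⟩
    exact disjoint_left.2 (fun z hz hz' => hz'.2 hz.2)
  choose A B hA hB hAB using key
  -- the binary tree of clopen sets
  let step : S → Bool → S := fun C b => if b then A C else B C
  have hstep : ∀ (C : S) (b : Bool), (step C b).1 ⊆ C.1 := by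
    intro C b; cases b <;> simp [step, hA, hB]
  have hstepdis : ∀ (C : S) (b b' : Bool), b ≠ b' → Disjoint (step C b).1 (step C b').1 := by
    intro C b b' hbb'
    cases b <;> cases b'
    exacts [absurd rfl hbb', (hAB C).symm, hAB C, absurd rfl hbb']
  let root : S := ⟨univ, isClopen_univ, univ_nonempty⟩
  let D : List Bool → S := fun l => l.foldl step root
  have hDconcat : ∀ (l : List Bool) (b : Bool), D (l ++ [b]) = step (D l) b := by
    intro l b; simp [D, List.foldl_append]
  let E : (ℕ → Bool) → ℕ → Set X := fun σ n => (D (List.ofFn fun i : Fin n => σ i)).1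
  have hofn : ∀ (σ : ℕ → Bool) (n : ℕ),
      (List.ofFn fun i : Fin (n + 1) => σ i) = (List.ofFn fun i : Fin n => σ i) ++ [σ n] := by
    intro σ n
    rw [List.ofFn_succ']
    simp [List.concat_eq_append]
  have hEdec : ∀ (σ : ℕ → Bool) (n : ℕ), E σ (n + 1) ⊆ E σ n := by
    intro σ n
    show (D _).1 ⊆ (D _).1
    rw [hofn, hDconcat]
    exact hstep _ _
  have hEne : ∀ (σ : ℕ → Bool) (n : ℕ), (E σ n).Nonempty := fun σ n => (D _).2.2
  have hEcl : ∀ (σ : ℕ → Bool) (n : ℕ), IsClosed (E σ n) := fun σ n => (D _).2.1.1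
  have hEcap : ∀ σ : ℕ → Bool, (⋂ n, E σ n).Nonempty := by
    intro σ
    exact IsCompact.nonempty_iInter_of_sequence_nonempty_isCompact_isClosed _
      (hEdec σ) (hEne σ) ((hEcl σ 0).isCompact) (hEcl σ)
  choose f hf using hEcap
  have hinj : Function.Injective f := by
    intro σ τ hfeq
    by_contra hne
    have hne' : ∃ n, σ n ≠ τ n := by
      by_contra h; push_neg at h; exact hne (funext h)
    let n := Nat.find hne'
    have hn : σ n ≠ τ n := Nat.find_spec hne'
    have hpre : (List.ofFn fun i : Fin n => σ i) = (List.ofFn fun i : Fin n => τ i) := by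
      congr 1; funext i
      by_contra h
      exact absurd (Nat.find_min hne' i.2) (by simpa using h)
    have h1 : f σ ∈ E σ (n + 1) := mem_iInter.1 (hf σ) (n + 1)
    have h2 : f τ ∈ E τ (n + 1) := mem_iInter.1 (hf τ) (n + 1)
    have e1 : E σ (n + 1) = (step (D (List.ofFn fun i : Fin n => σ i)) (σ n)).1 := by
      show (D _).1 = _
      rw [hofn, hDconcat]
    have e2 : E τ (n + 1) = (step (D (List.ofFn fun i : Fin n => σ i)) (τ n)).1 := by
      show (D _).1 = _
      rw [hofn, hDconcat, hpre]
    rw [e1] at h1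
    rw [e2] at h2
    rw [hfeq] at h1
    exact (hstepdis _ _ _ hn).ne_of_mem h1 h2 rfl
  have h0 : Cardinal.mk (ℕ → Bool) = Cardinal.continuum := by
    rw [Cardinal.mk_arrow, Cardinal.mk_bool, Cardinal.mk_nat, Cardinal.lift_id,
      Cardinal.lift_id, Cardinal.two_power_aleph0]
  have h1 := Cardinal.lift_mk_le'.2 ⟨⟨f, hinj⟩⟩
  rw [h0] at h1
  simpa using h1



/-- Let `G` be a periodic profinite group whose set of `m`-th powers has cardinality
less than `2^ℵ₀`, let `q` be a prime not dividing `m` and let `Q` be a Sylow pro-`q`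
subgroup of `G` (a maximal closed subgroup all of whose elements have `q`-power
order).  Then `Q` is finite. -/
theorem stmt16 {G : Type*} [Group G] [TopologicalSpace G] [IsTopologicalGroup G]
    [CompactSpace G] [T2Space G] [TotallyDisconnectedSpace G]
    (htors : ∀ g : G, IsOfFinOrder g) (m : ℕ) (hm : 0 < m)
    (hcard : Cardinal.mk ↥{x : G | ∃ g : G, g ^ m = x} < Cardinal.continuum)
    (q : ℕ) (hq : q.Prime) (hqm : ¬ q ∣ m)
    (Q : Subgroup G) (hQc : IsClosed (Q : Set G))
    (hQq : ∀ x ∈ Q, ∃ n : ℕ, x ^ q ^ n = 1)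
    (hQmax : ∀ Q' : Subgroup G, IsClosed (Q' : Set G) →
      (∀ x ∈ Q', ∃ n : ℕ, x ^ q ^ n = 1) → Q ≤ Q' → Q' = Q) :
    Finite ↥Q := by
  by_contra hfin
  rw [not_finite_iff_infinite] at hfin
  -- every element of `Q` is an `m`-th power
  have hsub : (Q : Set G) ⊆ {x : G | ∃ g : G, g ^ m = x} := by
    intro x hx
    obtain ⟨n, hn⟩ := hQq x hx
    have hk : orderOf x ∣ q ^ n := orderOf_dvd_of_pow_eq_one hn
    have hco : m.Coprime (orderOf x) :=
      (Nat.Coprime.coprime_dvd_left hk (((hq.coprime_iff_not_dvd).2 hqm).pow_left n)).symm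
    have hk0 : 0 < orderOf x := (htors x).orderOf_pos
    have hφ : 0 < Nat.totient (orderOf x) := Nat.totient_pos.2 hk0
    have heuler : m ^ Nat.totient (orderOf x) ≡ 1 [MOD orderOf x] :=
      Nat.ModEq.pow_totient hco
    refine ⟨x ^ (m ^ (Nat.totient (orderOf x) - 1)), ?_⟩
    rw [← pow_mul, ← pow_succ, Nat.sub_add_cancel hφ]
    have := (pow_eq_pow_iff_modEq (x := x)).2 heuler
    simpa using this
  -- hence its cardinality is less than the continuum
  have hQcard : Cardinal.mk ↥Q < Cardinal.continuum :=
    lt_of_le_of_lt (Cardinal.mk_le_mk_of_subset hsub) hcard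
  -- topological instances on `Q`
  have : CompactSpace ↥Q := isCompact_iff_compactSpace.mp hQc.isCompact
  have hne : Nonempty ↥Q := ⟨1⟩
  -- every nonempty clopen subset of the infinite group `Q` has two points
  have hsplit : ∀ C : Set ↥Q, IsClopen C → C.Nonempty →
      ∃ x ∈ C, ∃ y ∈ C, x ≠ y := by
    intro C hC ⟨x, hxC⟩
    by_contra h
    push_neg at h
    have hCx : C = {x} := by
      apply Set.eq_singleton_iff_unique_mem.2
      exact ⟨hxC, fun y hy => h y hy x hxC⟩
    have hopen : IsOpen ({x} : Set ↥Q) := hCx ▸ hC.2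
    have h1 : IsOpen ({1} : Set ↥Q) := by
      have := (Homeomorph.mulLeft x⁻¹).isOpenMap _ hopen
      simpa using this
    have := discreteTopology_of_isOpen_singleton_one h1
    exact not_finite_iff_infinite.mpr hfin finite_of_compact_of_discrete
  have := cantor_aux hsplit
  exact absurd hQcard (not_lt.2 this)
end

section
/- Let G be a group and let X ⊆ G be a finite normal subset (closed under conjugation by G) all of whose elements have finite order. Then the subgroup generated by X is a finite normal subgroup of G (Dicman's Lemma). -/
section Aux
variable {G : Type*} [Group G] [DecidableEq G] (X : Set G)

lemma dicman_pull (hnorm : ∀ g : G, ∀ x ∈ X, g⁻¹ * x * g ∈ X) :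
    ∀ l : List G, (∀ x ∈ l, x ∈ X) → ∀ y, y ∈ l →
      ∃ l' : List G, (∀ x ∈ l', x ∈ X) ∧ l'.length + 1 = l.length ∧
        l.prod = y * l'.prod ∧ l.count y ≤ l'.count y + 1 := by
  intro l
  induction l with
  | nil => intro _ y hy; simp at hy
  | cons a t ih =>
    intro hl y hy
    by_cases hya : y = a
    · refine ⟨t, fun x hx => hl x (List.mem_cons_of_mem a hx), by simp, by simp [hya], ?_⟩
      subst hya
      simp [List.count_cons_self]
    · have hyt : y ∈ t := by
        rcases List.mem_cons.1 hy with h | h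
        · exact absurd h hya
        · exact h
      obtain ⟨t', ht'X, ht'len, ht'prod, ht'count⟩ :=
        ih (fun x hx => hl x (List.mem_cons_of_mem a hx)) y hyt
      refine ⟨(y⁻¹ * a * y) :: t', ?_, ?_, ?_, ?_⟩
      · intro x hx
        rcases List.mem_cons.1 hx with h | h
        · exact h ▸ hnorm y a (hl a (List.mem_cons_self))
        · exact ht'X x h
      · simp [← ht'len]
      · rw [List.prod_cons, List.prod_cons, ht'prod]
        group
      · have h1 : (a :: t).count y = t.count y := by
          simp [List.count_cons, Ne.symm hya]
        have h2 : ((y⁻¹ * a * y) :: t').count y ≥ t'.count y := by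
          simp [List.count_cons]
        omega

lemma dicman_pull_pow (hnorm : ∀ g : G, ∀ x ∈ X, g⁻¹ * x * g ∈ X) :
    ∀ k : ℕ, ∀ l : List G, (∀ x ∈ l, x ∈ X) → ∀ y, k ≤ l.count y →
      ∃ l' : List G, (∀ x ∈ l', x ∈ X) ∧ l'.length + k = l.length ∧
        l.prod = y ^ k * l'.prod := by
  intro k
  induction k with
  | zero => intro l hl y _; exact ⟨l, hl, by simp, by simp⟩
  | succ n ih =>
    intro l hl y hc
    have hy : y ∈ l := List.count_pos_iff.1 (by omega)
    obtain ⟨l', hl'X, hl'len, hl'prod, hl'count⟩ := dicman_pull X hnorm l hl y hy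
    obtain ⟨l'', hl''X, hl''len, hl''prod⟩ := ih l' hl'X y (by omega)
    refine ⟨l'', hl''X, by omega, ?_⟩
    rw [hl'prod, hl''prod, ← mul_assoc, ← pow_succ']

end Aux

/-- Dicman's Lemma: if `X` is a finite normal subset of a group `G` all of whose
elements have finite order, then `⟨X⟩` is a finite normal subgroup of `G`. -/
theorem stmt17 {G : Type*} [Group G] (X : Set G) (hfin : X.Finite)
    (hnorm : ∀ g : G, ∀ x ∈ X, g⁻¹ * x * g ∈ X)
    (htors : ∀ x ∈ X, IsOfFinOrder x) :
    (Subgroup.closure X).Normal ∧ Finite ↥(Subgroup.closure X) := by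
  classical
  set N : ℕ := ∑ y ∈ hfin.toFinset, orderOf y with hN
  -- every element of the closure is a product of a list over X
  have mem_imp : ∀ g ∈ Subgroup.closure X,
      ∃ l : List G, (∀ x ∈ l, x ∈ X) ∧ g = l.prod := by
    intro g hg
    induction hg using Subgroup.closure_induction with
    | mem x hx => exact ⟨[x], by simpa using hx, by simp⟩
    | one => exact ⟨[], by simp, by simp⟩
    | mul a b _ _ iha ihb =>
      obtain ⟨la, hla, ha⟩ := iha
      obtain ⟨lb, hlb, hb⟩ := ihb
      refine ⟨la ++ lb, ?_, by simp [ha, hb]⟩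
      intro x hx
      rcases List.mem_append.1 hx with h | h
      · exact hla x h
      · exact hlb x h
    | inv a _ iha =>
      obtain ⟨la, hla, ha⟩ := iha
      subst ha
      clear * - hla htors
      induction la with
      | nil => exact ⟨[], by simp, by simp⟩
      | cons x t ih =>
        obtain ⟨m, hm, hmp⟩ := ih (fun z hz => hla z (List.mem_cons_of_mem x hz))
        have hxX : x ∈ X := hla x (List.mem_cons_self)
        have hord : 0 < orderOf x := (htors x hxX).orderOf_pos
        refine ⟨m ++ List.replicate (orderOf x - 1) x, ?_, ?_⟩
        · intro z hz
          rcases List.mem_append.1 hz with h | h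
          · exact hm z h
          · rw [List.eq_of_mem_replicate h]; exact hxX
        · rw [List.prod_cons, mul_inv_rev, hmp, List.prod_append, List.prod_replicate]
          congr 1
          have h1 : x ^ (orderOf x - 1) * x = 1 := by
            rw [← pow_succ, Nat.sub_add_cancel hord, pow_orderOf_eq_one]
          exact (eq_inv_of_mul_eq_one_left h1).symm
  -- shortening: every list over X has an equal-product list over X of length ≤ N
  have shorten : ∀ n : ℕ, ∀ l : List G, l.length ≤ n → (∀ x ∈ l, x ∈ X) →
      ∃ l' : List G, (∀ x ∈ l', x ∈ X) ∧ l'.length ≤ N ∧ l.prod = l'.prod := by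
    intro n
    induction n using Nat.strong_induction_on with
    | _ n ih =>
      intro l hlen hl
      by_cases hle : l.length ≤ N
      · exact ⟨l, hl, hle, rfl⟩
      · push_neg at hle
        -- pigeonhole: some y ∈ X occurs more than orderOf y times
        have hsub : (↑l : Multiset G).toFinset ⊆ hfin.toFinset := by
          intro z hz
          rw [Set.Finite.mem_toFinset]
          exact hl z (by simpa using hz)
        by_cases hex : ∃ y ∈ hfin.toFinset, orderOf y < l.count y
        · obtain ⟨y, hyX, hyc⟩ := hex
          have hyX' : y ∈ X := (Set.Finite.mem_toFinset hfin).1 hyX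
          have hordy : 0 < orderOf y := (htors y hyX').orderOf_pos
          obtain ⟨l', hl'X, hl'len, hl'prod⟩ :=
            dicman_pull_pow X hnorm (orderOf y) l hl y (le_of_lt hyc)
          have hn : 0 < n := by omega
          obtain ⟨l'', hl''X, hl''len, hl''prod⟩ :=
            ih (n - 1) (by omega) l' (by omega) hl'X
          exact ⟨l'', hl''X, hl''len, by
            rw [hl'prod, pow_orderOf_eq_one, one_mul, hl''prod]⟩
        · exfalso
          push_neg at hex
          have : l.length ≤ N := by
            have h1 : l.length = ∑ y ∈ (↑l : Multiset G).toFinset,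
                (↑l : Multiset G).count y := by
              rw [Multiset.toFinset_sum_count_eq]; simp
            have h2 : ∑ y ∈ (↑l : Multiset G).toFinset, (↑l : Multiset G).count y ≤
                ∑ y ∈ hfin.toFinset, (↑l : Multiset G).count y :=
              Finset.sum_le_sum_of_subset hsub
            have h3 : ∑ y ∈ hfin.toFinset, (↑l : Multiset G).count y ≤ N := by
              apply Finset.sum_le_sum
              intro y hy
              simpa using hex y hy
            omega
          omega
  -- Normality
  have hNormal : (Subgroup.closure X).Normal := by
    constructor
    intro a ha g
    induction ha using Subgroup.closure_induction with
    | mem x hx =>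
      apply Subgroup.subset_closure
      have := hnorm g⁻¹ x hx
      simpa using this
    | one => simpa using (Subgroup.closure X).one_mem
    | mul a b _ _ iha ihb =>
      have : g * (a * b) * g⁻¹ = (g * a * g⁻¹) * (g * b * g⁻¹) := by group
      rw [this]
      exact (Subgroup.closure X).mul_mem iha ihb
    | inv a _ iha =>
      have : g * a⁻¹ * g⁻¹ = (g * a * g⁻¹)⁻¹ := by group
      rw [this]
      exact (Subgroup.closure X).inv_mem iha
  refine ⟨hNormal, ?_⟩
  -- Finiteness
  have hXfin : Finite ↥(hfin.toFinset : Finset G) := inferInstance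
  have himfin : ({l : List ↥(hfin.toFinset : Finset G) | l.length ≤ N}).Finite :=
    List.finite_length_le _ N
  have himage : ((Subgroup.closure X : Set G)) ⊆
      (fun l : List ↥(hfin.toFinset : Finset G) => (l.map Subtype.val).prod) ''
        {l | l.length ≤ N} := by
    intro g hg
    obtain ⟨l, hlX, hgl⟩ := mem_imp g hg
    obtain ⟨l', hl'X, hl'len, hl'prod⟩ := shorten l.length l le_rfl hlX
    refine ⟨l'.pmap (fun x hx => (⟨x, hx⟩ : ↥(hfin.toFinset : Finset G)))
      (fun x hx => (Set.Finite.mem_toFinset hfin).2 (hl'X x hx)), ?_, ?_⟩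
    · simpa using hl'len
    · rw [hgl, hl'prod]
      simp [List.map_pmap]
  have : (Subgroup.closure X : Set G).Finite := (himfin.image _).subset himage
  exact this.to_subtype
end
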